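/- arXiv:1311.2325 — 4 statements merged into one kernel-verified Lean document; each statement's English description precedes it below -/
import Mathlib

section
/- With J_N := J_N(1) defined as the iterated simplex integral ∫_{1≥t_2≥⋯≥t_{N+1}≥0} ∏_{i=2}^{N+1} (∑_{j=1}^{i-1} 1/√(t_j−t_i)) dt_2⋯dt_{N+1} (t_1 := 1), one has the lower bound J_N ≥ 2^N. -/
open MeasureTheory

/-- `tval N t s j` is the value `t_{j+1}` in the paper's notation: `tval _ t _ 0 = t_1 = t`
and `tval N t s (j+1) = t_{j+2} = s j`. -/
noncomputable def tval (N : ℕ) (t : ℝ) (s : Fin N → ℝ) : ℕ → ℝ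
  | 0 => t
  | j + 1 => if h : j < N then s ⟨j, h⟩ else 0

/-- The simplex `t ≥ t_2 ≥ t_3 ≥ ⋯ ≥ t_{N+1} ≥ 0` (here `s i = t_{i+2}`). -/
def simplexSet (N : ℕ) (t : ℝ) : Set (Fin N → ℝ) :=
  {s | (∀ i, 0 ≤ s i) ∧ (∀ i j : Fin N, i ≤ j → s j ≤ s i) ∧ (∀ i, s i ≤ t)}

/-- `J N t = ∫_{t ≥ t_2 ≥ ⋯ ≥ t_{N+1} ≥ 0} ∏_{i=2}^{N+1} (∑_{j=1}^{i-1} 1/√(t_j - t_i))`. -/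
noncomputable def Jfun (N : ℕ) (t : ℝ) : ℝ :=
  ∫ s in simplexSet N t, ∏ i : Fin N,
    ∑ j ∈ Finset.range (i.val + 1), 1 / Real.sqrt (tval N t s j - tval N t s (i.val + 1))




lemma one_div_sqrt_eq_rpow {y : ℝ} (hy : 0 ≤ y) : 1 / Real.sqrt y = y ^ (-(1/2) : ℝ) := by
  rw [Real.sqrt_eq_rpow, Real.rpow_neg hy, one_div]

lemma intervalIntegrable_one_sub_rpow :
    IntervalIntegrable (fun x : ℝ => (1 - x) ^ (-(1/2) : ℝ)) volume 0 1 := by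
  have h := intervalIntegral.intervalIntegrable_rpow' (a := 0) (b := 1) (r := (-(1/2) : ℝ))
    (by norm_num)
  have := (h.comp_sub_left 1).symm
  simpa using this

lemma integrableOn_one_div_sqrt_one_sub :
    IntegrableOn (fun x : ℝ => 1 / Real.sqrt (1 - x)) (Set.Icc 0 1) volume := by
  have h1 : IntegrableOn (fun x : ℝ => (1 - x) ^ (-(1/2) : ℝ)) (Set.Icc (0:ℝ) 1) volume := by
    rw [integrableOn_Icc_iff_integrableOn_Ioc]
    exact (intervalIntegrable_iff_integrableOn_Ioc_of_le (by norm_num)).mp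
      intervalIntegrable_one_sub_rpow
  exact h1.congr_fun (fun x hx => (one_div_sqrt_eq_rpow (by linarith [hx.2])).symm) measurableSet_Icc

lemma integral_one_div_sqrt_one_sub :
    ∫ x in Set.Icc (0:ℝ) 1, 1 / Real.sqrt (1 - x) = 2 := by
  rw [setIntegral_congr_fun measurableSet_Icc
    (g := fun x : ℝ => (1 - x) ^ (-(1/2) : ℝ))
    (fun x hx => one_div_sqrt_eq_rpow (by linarith [hx.2]))]
  rw [MeasureTheory.integral_Icc_eq_integral_Ioc, ← intervalIntegral.integral_of_le (by norm_num)]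
  rw [intervalIntegral.integral_comp_sub_left (fun x => x ^ (-(1/2):ℝ)) 1]
  norm_num
  rw [integral_rpow (Or.inl (by norm_num))]
  rw [show (-(1/2) : ℝ) + 1 = 1/2 by norm_num, Real.zero_rpow (by norm_num), Real.one_rpow]
  norm_num

lemma integrableOn_one_div_sqrt :
    IntegrableOn (fun x : ℝ => 1 / Real.sqrt x) (Set.Icc 0 1) volume := by
  have h1 : IntegrableOn (fun x : ℝ => x ^ (-(1/2) : ℝ)) (Set.Icc (0:ℝ) 1) volume := by
    rw [integrableOn_Icc_iff_integrableOn_Ioc]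
    exact (intervalIntegrable_iff_integrableOn_Ioc_of_le (by norm_num)).mp
      (intervalIntegral.intervalIntegrable_rpow' (by norm_num))
  exact h1.congr_fun (fun x hx => (one_div_sqrt_eq_rpow hx.1).symm) measurableSet_Icc


noncomputable def f1 : ℝ → ℝ := (Set.Icc (0:ℝ) 1).indicator (fun x => 1 / Real.sqrt (1 - x))

noncomputable def hfun (N : ℕ) (s : Fin N → ℝ) : ℝ := ∏ i, 1 / Real.sqrt (1 - s i)

def cubeSet (N : ℕ) : Set (Fin N → ℝ) := {s | ∀ i, s i ∈ Set.Icc (0:ℝ) 1}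

lemma hfun_nonneg (N : ℕ) (s : Fin N → ℝ) : 0 ≤ hfun N s :=
  Finset.prod_nonneg fun i _ => by positivity

lemma measurableSet_cubeSet (N : ℕ) : MeasurableSet (cubeSet N) := by
  have : cubeSet N = Set.pi Set.univ (fun _ : Fin N => Set.Icc (0:ℝ) 1) := by
    ext s; constructor
    · intro h i _; exact h i
    · intro h i; exact h i (Set.mem_univ i)
  rw [this]
  exact MeasurableSet.univ_pi fun i => measurableSet_Icc

lemma measurableSet_simplexSet (N : ℕ) (t : ℝ) : MeasurableSet (simplexSet N t) := by
  have : IsClosed (simplexSet N t) := by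
    have e : simplexSet N t = (⋂ i, {s : Fin N → ℝ | 0 ≤ s i}) ∩
        ((⋂ i, ⋂ j, ⋂ (_ : i ≤ j), {s : Fin N → ℝ | s j ≤ s i}) ∩
          ⋂ i, {s : Fin N → ℝ | s i ≤ t}) := by
      ext s
      simp only [simplexSet, Set.mem_inter_iff, Set.mem_iInter, Set.mem_setOf_eq]
    rw [e]
    refine (isClosed_iInter fun i => isClosed_le continuous_const (continuous_apply i)).inter
      (IsClosed.inter ?_ ?_)
    · exact isClosed_iInter fun i => isClosed_iInter fun j => isClosed_iInter fun _ =>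
        isClosed_le (continuous_apply j) (continuous_apply i)
    · exact isClosed_iInter fun i => isClosed_le (continuous_apply i) continuous_const
  exact this.measurableSet

lemma prod_f1_eq (N : ℕ) :
    (fun s : Fin N → ℝ => ∏ i, f1 (s i)) = (cubeSet N).indicator (hfun N) := by
  funext s
  by_cases hs : s ∈ cubeSet N
  · rw [Set.indicator_of_mem hs, hfun]
    exact Finset.prod_congr rfl fun i _ => Set.indicator_of_mem (hs i) _
  · rw [Set.indicator_of_notMem hs]
    obtain ⟨i, hi⟩ := not_forall.mp hs
    exact Finset.prod_eq_zero (Finset.mem_univ i) (Set.indicator_of_notMem hi _)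

lemma integrable_f1 : Integrable f1 := by
  rw [f1, integrable_indicator_iff measurableSet_Icc]
  exact integrableOn_one_div_sqrt_one_sub

lemma integral_f1 : ∫ x, f1 x = 2 := by
  rw [f1, integral_indicator measurableSet_Icc]
  exact integral_one_div_sqrt_one_sub

lemma integrable_prod_f1 (N : ℕ) : Integrable (fun s : Fin N → ℝ => ∏ i, f1 (s i)) :=
  Integrable.fintype_prod (𝕜 := ℝ) fun _ => integrable_f1

lemma integral_prod_f1 (N : ℕ) : ∫ s : Fin N → ℝ, ∏ i, f1 (s i) = 2 ^ N := by
  rw [volume_pi, MeasureTheory.integral_fintype_prod_eq_pow (𝕜 := ℝ) (ι := Fin N) f1, integral_f1]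
  simp

lemma integrableOn_hfun_cube (N : ℕ) : IntegrableOn (hfun N) (cubeSet N) := by
  rw [← integrable_indicator_iff (measurableSet_cubeSet N), ← prod_f1_eq]
  exact integrable_prod_f1 N
def permMap {N : ℕ} (σ : Equiv.Perm (Fin N)) (s : Fin N → ℝ) : Fin N → ℝ := fun i => s (σ i)

def Bset {N : ℕ} (σ : Equiv.Perm (Fin N)) : Set (Fin N → ℝ) := permMap σ ⁻¹' simplexSet N 1

lemma permMap_eq_piCongrLeft {N : ℕ} (σ : Equiv.Perm (Fin N)) :
    ⇑(MeasurableEquiv.piCongrLeft (fun _ : Fin N => ℝ) σ.symm) = permMap σ := by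
  funext s i
  have : i = σ.symm (σ i) := (Equiv.symm_apply_apply σ i).symm
  rw [permMap]
  show (MeasurableEquiv.piCongrLeft (fun _ : Fin N => ℝ) σ.symm) s i = s (σ i)
  rw [MeasurableEquiv.coe_piCongrLeft]
  conv_lhs => rw [this]
  exact Equiv.piCongrLeft_apply_apply (fun _ : Fin N => ℝ) σ.symm s (σ i)

lemma measurePreserving_permMap {N : ℕ} (σ : Equiv.Perm (Fin N)) :
    MeasurePreserving (permMap σ) (volume : Measure (Fin N → ℝ)) volume := by
  have := MeasureTheory.volume_measurePreserving_piCongrLeft (fun _ : Fin N => ℝ) σ.symm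
  rwa [permMap_eq_piCongrLeft σ] at this

lemma measurableEmbedding_permMap {N : ℕ} (σ : Equiv.Perm (Fin N)) :
    MeasurableEmbedding (permMap σ) := by
  rw [← permMap_eq_piCongrLeft σ]
  exact (MeasurableEquiv.piCongrLeft (fun _ : Fin N => ℝ) σ.symm).measurableEmbedding

lemma measurableSet_Bset {N : ℕ} (σ : Equiv.Perm (Fin N)) : MeasurableSet (Bset σ) :=
  (measurableEmbedding_permMap σ).measurable (measurableSet_simplexSet N 1)

lemma Bset_subset_cube {N : ℕ} (σ : Equiv.Perm (Fin N)) : Bset σ ⊆ cubeSet N := by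
  intro s hs i
  have h1 := hs.1 (σ.symm i)
  have h2 := hs.2.2 (σ.symm i)
  simp only [permMap, Equiv.apply_symm_apply] at h1 h2
  exact ⟨h1, h2⟩

lemma exists_sorting {N : ℕ} {s : Fin N → ℝ} (hs : s ∈ cubeSet N) :
    ∃ σ : Equiv.Perm (Fin N), s ∈ Bset σ := by
  refine ⟨(Fin.revPerm.trans (Tuple.sort s)), ?_⟩
  have hmono := Tuple.monotone_sort s
  refine ⟨fun i => (hs _).1, fun i j hij => ?_, fun i => (hs _).2⟩
  have : Fin.revPerm.trans (Tuple.sort s) = fun k => Tuple.sort s (Fin.rev k) := rfl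
  show s (Tuple.sort s (Fin.rev j)) ≤ s (Tuple.sort s (Fin.rev i))
  exact hmono (Fin.rev_le_rev.mpr hij)

lemma hfun_perm {N : ℕ} (σ : Equiv.Perm (Fin N)) (s : Fin N → ℝ) :
    hfun N (permMap σ s) = hfun N s :=
  Equiv.prod_comp σ (fun i => 1 / Real.sqrt (1 - s i))

lemma setIntegral_Bset {N : ℕ} (σ : Equiv.Perm (Fin N)) :
    ∫ s in Bset σ, hfun N s = ∫ s in simplexSet N 1, hfun N s := by
  have := (measurePreserving_permMap σ).setIntegral_preimage_emb
    (measurableEmbedding_permMap σ) (hfun N) (simplexSet N 1)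
  rw [← this]
  exact setIntegral_congr_fun (measurableSet_Bset σ) fun s _ => (hfun_perm σ s).symm

lemma pointwise_cover (N : ℕ) (s : Fin N → ℝ) :
    ∏ i, f1 (s i) ≤ ∑ σ : Equiv.Perm (Fin N), (Bset σ).indicator (hfun N) s := by
  by_cases hs : s ∈ cubeSet N
  · obtain ⟨σ, hσ⟩ := exists_sorting hs
    have h1 : ∏ i, f1 (s i) = hfun N s := by
      rw [congrFun (prod_f1_eq N) s, Set.indicator_of_mem hs]
    rw [h1]
    have := Finset.single_le_sum (f := fun σ : Equiv.Perm (Fin N) => (Bset σ).indicator (hfun N) s)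
      (fun τ _ => Set.indicator_nonneg (fun x _ => hfun_nonneg N x) s) (Finset.mem_univ σ)
    simp only [Set.indicator_of_mem hσ] at this
    exact this
  · have h1 : ∏ i, f1 (s i) = 0 := by
      rw [congrFun (prod_f1_eq N) s, Set.indicator_of_notMem hs]
    rw [h1]
    exact Finset.sum_nonneg fun τ _ => Set.indicator_nonneg (fun x _ => hfun_nonneg N x) s

lemma two_pow_le_factorial_mul_integral (N : ℕ) :
    (2 : ℝ) ^ N ≤ (N.factorial : ℝ) * ∫ s in simplexSet N 1, hfun N s := by
  have hint : ∀ σ : Equiv.Perm (Fin N), Integrable ((Bset σ).indicator (hfun N)) := by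
    intro σ
    rw [integrable_indicator_iff (measurableSet_Bset σ)]
    exact (integrableOn_hfun_cube N).mono_set (Bset_subset_cube σ)
  have hmono := integral_mono (integrable_prod_f1 N)
    (integrable_finset_sum Finset.univ fun σ _ => hint σ) (pointwise_cover N)
  rw [integral_prod_f1 N, integral_finset_sum Finset.univ (fun σ _ => hint σ)] at hmono
  calc (2:ℝ)^N ≤ _ := hmono
    _ = (N.factorial : ℝ) * ∫ s in simplexSet N 1, hfun N s := by
        rw [Finset.sum_congr rfl (fun σ _ => by
          rw [integral_indicator (measurableSet_Bset σ), setIntegral_Bset σ])]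
        rw [Finset.sum_const, Finset.card_univ, Fintype.card_perm, Fintype.card_fin,
          nsmul_eq_mul]


lemma tval_zero (N : ℕ) (t : ℝ) (s : Fin N → ℝ) : tval N t s 0 = t := rfl

lemma tval_succ (N : ℕ) (t : ℝ) (s : Fin N → ℝ) {k : ℕ} (h : k < N) :
    tval N t s (k + 1) = s ⟨k, h⟩ := by simp [tval, h]

/-- strict ordering property -/
def strictP (N : ℕ) (s : Fin N → ℝ) : Prop :=
  (∀ i, s i < 1) ∧ ∀ i j : Fin N, i < j → s j < s i

lemma tval_le_one {N : ℕ} {s : Fin N → ℝ} (hs : s ∈ simplexSet N 1) {j : ℕ} (hj : j ≤ N) :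
    tval N 1 s j ≤ 1 := by
  cases j with
  | zero => exact le_refl 1
  | succ k => rw [tval_succ N 1 s (by omega)]; exact hs.2.2 _

lemma tval_nonneg {N : ℕ} {s : Fin N → ℝ} (hs : s ∈ simplexSet N 1) {j : ℕ} (hj : j ≤ N) :
    0 ≤ tval N 1 s j := by
  cases j with
  | zero => exact zero_le_one
  | succ k => rw [tval_succ N 1 s (by omega)]; exact hs.1 _

lemma tval_anti {N : ℕ} {s : Fin N → ℝ} (hs : s ∈ simplexSet N 1) {a b : ℕ}
    (hab : a ≤ b) (hb : b ≤ N) : tval N 1 s b ≤ tval N 1 s a := by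
  cases a with
  | zero => exact tval_le_one hs hb
  | succ l =>
    cases b with
    | zero => omega
    | succ k =>
      rw [tval_succ N 1 s (show l < N by omega), tval_succ N 1 s (show k < N by omega)]
      exact hs.2.1 _ _ (by simp [Fin.le_def]; omega)

lemma tval_strict_anti {N : ℕ} {s : Fin N → ℝ} (hs : s ∈ simplexSet N 1)
    (hP : strictP N s) {a b : ℕ} (hab : a < b) (hb : b ≤ N) :
    tval N 1 s b < tval N 1 s a := by
  cases b with
  | zero => omega
  | succ k =>
    rw [tval_succ N 1 s (show k < N by omega)]
    cases a with
    | zero => exact hP.1 _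
    | succ l =>
      rw [tval_succ N 1 s (show l < N by omega)]
      exact hP.2 _ _ (by simp [Fin.lt_def]; omega)

noncomputable def Ffun (N : ℕ) (s : Fin N → ℝ) : ℝ :=
  ∏ i : Fin N, ∑ j ∈ Finset.range (i.val + 1), 1 / Real.sqrt (tval N 1 s j - tval N 1 s (i.val + 1))

noncomputable def gfun (N : ℕ) (s : Fin N → ℝ) : ℝ :=
  ∏ i : Fin N, 1 / Real.sqrt (tval N 1 s i.val - tval N 1 s (i.val + 1))

lemma prod_val_succ (N : ℕ) : ∏ i : Fin N, ((i.val : ℝ) + 1) = (N.factorial : ℝ) := by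
  rw [Fin.prod_univ_eq_prod_range (fun k => ((k : ℝ) + 1)) N]
  exact_mod_cast congrArg (Nat.cast (R := ℝ)) (Finset.prod_range_add_one_eq_factorial N)

lemma Ffun_bounds {N : ℕ} {s : Fin N → ℝ} (hs : s ∈ simplexSet N 1) (hP : strictP N s) :
    (N.factorial : ℝ) * hfun N s ≤ Ffun N s ∧ Ffun N s ≤ (N.factorial : ℝ) * gfun N s := by
  -- per-i sum bounds
  have hsucc : ∀ i : Fin N, tval N 1 s (i.val + 1) = s i := fun i => by
    rw [tval_succ N 1 s i.isLt]
  have hpos : ∀ i : Fin N, 0 < tval N 1 s i.val - tval N 1 s (i.val + 1) := fun i =>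
    sub_pos.mpr (tval_strict_anti hs hP (Nat.lt_succ_self _) i.isLt)
  have hterm_low : ∀ i : Fin N, ∀ j ∈ Finset.range (i.val + 1),
      1 / Real.sqrt (1 - s i) ≤ 1 / Real.sqrt (tval N 1 s j - tval N 1 s (i.val + 1)) := by
    intro i j hj
    rw [Finset.mem_range] at hj
    have h1 : tval N 1 s (i.val + 1) < tval N 1 s j := tval_strict_anti hs hP (by omega) i.isLt
    have h2 : tval N 1 s j ≤ 1 := tval_le_one hs (by omega)
    apply one_div_le_one_div_of_le (Real.sqrt_pos.mpr (by linarith))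
    apply Real.sqrt_le_sqrt
    rw [hsucc i]; linarith [hsucc i ▸ h1]
  have hterm_up : ∀ i : Fin N, ∀ j ∈ Finset.range (i.val + 1),
      1 / Real.sqrt (tval N 1 s j - tval N 1 s (i.val + 1)) ≤
        1 / Real.sqrt (tval N 1 s i.val - tval N 1 s (i.val + 1)) := by
    intro i j hj
    rw [Finset.mem_range] at hj
    apply one_div_le_one_div_of_le (Real.sqrt_pos.mpr (hpos i))
    exact Real.sqrt_le_sqrt (sub_le_sub_right (tval_anti hs (show j ≤ i.val by omega) (le_of_lt i.isLt)) _)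
  constructor
  · rw [show (N.factorial : ℝ) * hfun N s
        = ∏ i : Fin N, (((i.val : ℝ) + 1) * (1 / Real.sqrt (1 - s i))) by
      rw [Finset.prod_mul_distrib, prod_val_succ N, hfun]]
    apply Finset.prod_le_prod
    · intro i _; positivity
    · intro i _
      calc ((i.val : ℝ) + 1) * (1 / Real.sqrt (1 - s i))
          = ∑ j ∈ Finset.range (i.val + 1), 1 / Real.sqrt (1 - s i) := by
            rw [Finset.sum_const, Finset.card_range, nsmul_eq_mul]; push_cast; ring
        _ ≤ _ := Finset.sum_le_sum (hterm_low i)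
  · rw [show (N.factorial : ℝ) * gfun N s
        = ∏ i : Fin N, (((i.val : ℝ) + 1) *
            (1 / Real.sqrt (tval N 1 s i.val - tval N 1 s (i.val + 1)))) by
      rw [Finset.prod_mul_distrib, prod_val_succ N, gfun]]
    apply Finset.prod_le_prod
    · intro i _
      exact Finset.sum_nonneg fun j _ => by positivity
    · intro i _
      calc ∑ j ∈ Finset.range (i.val + 1), 1 / Real.sqrt (tval N 1 s j - tval N 1 s (i.val + 1))
          ≤ ∑ j ∈ Finset.range (i.val + 1),
              1 / Real.sqrt (tval N 1 s i.val - tval N 1 s (i.val + 1)) :=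
            Finset.sum_le_sum (hterm_up i)
        _ = _ := by rw [Finset.sum_const, Finset.card_range, nsmul_eq_mul]; push_cast; ring

lemma Ffun_nonneg (N : ℕ) (s : Fin N → ℝ) : 0 ≤ Ffun N s :=
  Finset.prod_nonneg fun i _ => Finset.sum_nonneg fun j _ => by positivity


lemma volume_eq_one_null (N : ℕ) (i : Fin N) (c : ℝ) :
    volume {s : Fin N → ℝ | s i = c} = 0 := by
  rw [volume_pi]
  exact Measure.pi_hyperplane (fun _ : Fin N => (volume : Measure ℝ)) i c

lemma volume_eq_coord_null (N : ℕ) {i j : Fin N} (hij : i ≠ j) :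
    volume {s : Fin N → ℝ | s i = s j} = 0 := by
  set L : (Fin N → ℝ) →ₗ[ℝ] ℝ := (LinearMap.proj i : (Fin N → ℝ) →ₗ[ℝ] ℝ) - (LinearMap.proj j : (Fin N → ℝ) →ₗ[ℝ] ℝ) with hL
  have hset : {s : Fin N → ℝ | s i = s j} = (LinearMap.ker L : Set (Fin N → ℝ)) := by
    ext s
    simp [hL, LinearMap.mem_ker, sub_eq_zero]
  rw [hset]
  apply Measure.addHaar_submodule
  intro htop
  have h1 : (Pi.single i 1 : Fin N → ℝ) ∈ LinearMap.ker L := htop ▸ Submodule.mem_top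
  rw [LinearMap.mem_ker] at h1
  simp [hL, Pi.single_apply, hij.symm] at h1

lemma ae_strict (N : ℕ) :
    ∀ᵐ s : Fin N → ℝ, (∀ i : Fin N, s i ≠ 1) ∧ ∀ i j : Fin N, i ≠ j → s i ≠ s j := by
  have h1 : volume ((⋃ i : Fin N, {s : Fin N → ℝ | s i = 1}) ∪
      ⋃ i : Fin N, ⋃ j : Fin N, ⋃ _ : i ≠ j, {s : Fin N → ℝ | s i = s j}) = 0 := by
    apply measure_union_null
    · exact measure_iUnion_null fun i => volume_eq_one_null N i 1
    · exact measure_iUnion_null fun i => measure_iUnion_null fun j =>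
        measure_iUnion_null fun hij => volume_eq_coord_null N hij
  rw [← compl_mem_ae_iff] at h1
  filter_upwards [h1] with s hs
  simp only [Set.mem_compl_iff, Set.mem_union, Set.mem_iUnion, Set.mem_setOf_eq, not_or,
    not_exists] at hs
  exact ⟨fun i => hs.1 i, fun i j hij => hs.2 i j hij⟩


noncomputable def Lmap (N : ℕ) : (Fin N → ℝ) →ₗ[ℝ] (Fin N → ℝ) where
  toFun u := fun i => -∑ j ∈ Finset.Iic i, u j
  map_add' u v := by
    funext i; simp [Finset.sum_add_distrib]; ring
  map_smul' c u := by
    funext i; simp [Finset.mul_sum]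

lemma det_Lmap (N : ℕ) : LinearMap.det (Lmap N) = (-1) ^ N := by
  rw [← LinearMap.det_toMatrix' (Lmap N)]
  have hM : ∀ i j : Fin N, LinearMap.toMatrix' (Lmap N) i j
      = if j ≤ i then (-1 : ℝ) else 0 := by
    intro i j
    rw [LinearMap.toMatrix'_apply]
    show -∑ k ∈ Finset.Iic i, (Pi.single j (1:ℝ) : Fin N → ℝ) k = _
    simp only [Pi.single_apply]
    rw [Finset.sum_ite_eq' (Finset.Iic i) j (fun _ => (1:ℝ))]
    by_cases h : j ≤ i <;> simp [h, Finset.mem_Iic]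
  have htri : (LinearMap.toMatrix' (Lmap N)).BlockTriangular OrderDual.toDual := by
    intro i j hij
    have : i < j := hij
    rw [hM i j, if_neg (by exact fun h => absurd (lt_of_lt_of_le this h) (lt_irrefl i))]
  rw [Matrix.det_of_lowerTriangular _ htri]
  simp [hM]

noncomputable def Tmap (N : ℕ) : (Fin N → ℝ) → (Fin N → ℝ) :=
  fun u => (fun _ => (1:ℝ)) + Lmap N u

lemma Tmap_apply (N : ℕ) (u : Fin N → ℝ) (i : Fin N) :
    Tmap N u i = 1 - ∑ j ∈ Finset.Iic i, u j := by
  simp [Tmap, Lmap]; ring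

lemma measurePreserving_Tmap (N : ℕ) :
    MeasurePreserving (Tmap N) (volume : Measure (Fin N → ℝ)) volume := by
  have hdet : LinearMap.det (Lmap N) ≠ 0 := by
    rw [det_Lmap]; exact pow_ne_zero _ (by norm_num)
  have hL : MeasurePreserving (Lmap N) (volume : Measure (Fin N → ℝ)) volume := by
    refine ⟨(Lmap N).continuous_of_finiteDimensional.measurable, ?_⟩
    rw [Measure.map_linearMap_addHaar_eq_smul_addHaar volume hdet, det_Lmap]
    have : |(((-1:ℝ)) ^ N)⁻¹| = 1 := by
      rw [abs_inv, abs_pow, abs_neg, abs_one, one_pow, inv_one]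
    rw [this, ENNReal.ofReal_one, one_smul]
  exact (measurePreserving_add_left volume (fun _ => (1:ℝ))).comp hL

lemma Tmap_gap (N : ℕ) (u : Fin N → ℝ) (i : Fin N) :
    tval N 1 (Tmap N u) i.val - tval N 1 (Tmap N u) (i.val + 1) = u i := by
  have hsucc : tval N 1 (Tmap N u) (i.val + 1) = Tmap N u i := by
    rw [tval_succ N 1 _ i.isLt]
  rcases Nat.eq_zero_or_eq_succ_pred i.val with h0 | hk
  · have hi : Finset.Iic i = {i} := by
      ext j
      simp only [Finset.mem_Iic, Finset.mem_singleton, Fin.le_def, Fin.ext_iff]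
      omega
    rw [hsucc, Tmap_apply, hi, Finset.sum_singleton, h0]
    rw [show tval N 1 (Tmap N u) 0 = 1 from rfl]
    ring
  · set k := i.val.pred with hkdef
    have hkN : k < N := by have := i.isLt; omega
    set i' : Fin N := ⟨k, hkN⟩ with hi'
    have hval : i'.val = k := rfl
    have hvi : tval N 1 (Tmap N u) i.val = Tmap N u i' := by
      rw [hk]; exact tval_succ N 1 _ hkN
    have hnotmem : i ∉ Finset.Iic i' := by
      simp only [Finset.mem_Iic, Fin.le_def, hval]
      omega
    have hins : Finset.Iic i = insert i (Finset.Iic i') := by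
      ext j
      simp only [Finset.mem_Iic, Finset.mem_insert, Fin.le_def, Fin.ext_iff, hval]
      omega
    rw [hsucc, hvi, Tmap_apply, Tmap_apply, hins, Finset.sum_insert hnotmem]
    ring

-- measurability
lemma measurable_tval (N : ℕ) (j : ℕ) : Measurable (fun s : Fin N → ℝ => tval N 1 s j) := by
  cases j with
  | zero => exact measurable_const
  | succ k =>
    by_cases h : k < N
    · have : (fun s : Fin N → ℝ => tval N 1 s (k+1)) = fun s => s ⟨k, h⟩ := by
        funext s; exact tval_succ N 1 s h
      rw [this]; exact measurable_pi_apply _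
    · have : (fun s : Fin N → ℝ => tval N 1 s (k+1)) = fun _ => (0:ℝ) := by
        funext s; simp [tval, h]
      rw [this]; exact measurable_const

lemma measurable_one_div_sqrt {α : Type*} [MeasurableSpace α] {f : α → ℝ} (hf : Measurable f) :
    Measurable fun s => 1 / Real.sqrt (f s) :=
  measurable_const.div (Real.continuous_sqrt.measurable.comp hf)

lemma measurable_Ffun (N : ℕ) : Measurable (Ffun N) :=
  Finset.measurable_prod _ fun i _ => Finset.measurable_sum _ fun j _ =>
    measurable_one_div_sqrt ((measurable_tval N j).sub (measurable_tval N (i.val + 1)))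

lemma measurable_gfun (N : ℕ) : Measurable (gfun N) :=
  Finset.measurable_prod _ fun i _ =>
    measurable_one_div_sqrt ((measurable_tval N i.val).sub (measurable_tval N (i.val + 1)))

-- integrability of the product of 1/sqrt on the cube
noncomputable def q1 : ℝ → ℝ := (Set.Icc (0:ℝ) 1).indicator (fun x => 1 / Real.sqrt x)

lemma integrable_q1 : Integrable q1 := by
  rw [q1, integrable_indicator_iff measurableSet_Icc]
  exact integrableOn_one_div_sqrt

lemma prod_q1_eq (N : ℕ) :
    (fun u : Fin N → ℝ => ∏ i, q1 (u i))
      = (cubeSet N).indicator (fun u => ∏ i, 1 / Real.sqrt (u i)) := by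
  funext u
  by_cases hu : u ∈ cubeSet N
  · rw [Set.indicator_of_mem hu]
    exact Finset.prod_congr rfl fun i _ => Set.indicator_of_mem (hu i) _
  · rw [Set.indicator_of_notMem hu]
    obtain ⟨i, hi⟩ := not_forall.mp hu
    exact Finset.prod_eq_zero (Finset.mem_univ i) (Set.indicator_of_notMem hi _)

lemma integrableOn_sqrtprod_cube (N : ℕ) :
    IntegrableOn (fun u : Fin N → ℝ => ∏ i, 1 / Real.sqrt (u i)) (cubeSet N) := by
  rw [← integrable_indicator_iff (measurableSet_cubeSet N), ← prod_q1_eq]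
  exact Integrable.fintype_prod (𝕜 := ℝ) fun _ => integrable_q1

lemma Tmap_preimage_subset (N : ℕ) : Tmap N ⁻¹' (simplexSet N 1) ⊆ cubeSet N := by
  intro u hu i
  have hgap := Tmap_gap N u i
  have h1 : 0 ≤ u i := by
    rw [← hgap]
    exact sub_nonneg.mpr (tval_anti hu (Nat.le_succ _) i.isLt)
  have h2 : u i ≤ 1 := by
    rw [← hgap]
    have := tval_le_one hu (le_of_lt i.isLt)
    have h0 := tval_nonneg hu (N := N) (j := i.val + 1) i.isLt
    linarith
  exact ⟨h1, h2⟩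

lemma integrableOn_gfun (N : ℕ) : IntegrableOn (gfun N) (simplexSet N 1) := by
  have hmp := (measurePreserving_Tmap N).restrict_preimage (measurableSet_simplexSet N 1)
  rw [IntegrableOn, ← hmp.map_eq,
    integrable_map_measure ((measurable_gfun N).aestronglyMeasurable)
      ((measurePreserving_Tmap N).measurable.aemeasurable)]
  have heq : gfun N ∘ Tmap N = fun u => ∏ i : Fin N, 1 / Real.sqrt (u i) := by
    funext u
    simp only [Function.comp_apply, gfun]
    exact Finset.prod_congr rfl fun i _ => by rw [Tmap_gap]
  rw [heq]
  exact (integrableOn_sqrtprod_cube N).mono_set (Tmap_preimage_subset N)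

lemma simplex_subset_cube (N : ℕ) : simplexSet N 1 ⊆ cubeSet N :=
  fun s hs i => ⟨hs.1 i, hs.2.2 i⟩

/-- the lower bound `J_N ≥ 2^N`, where `J_N := J_N(1)`. -/
theorem Jfun_one_ge_two_pow (N : ℕ) (hN : 1 ≤ N) :
    (2 : ℝ) ^ N ≤ Jfun N 1 := by
  set μ := (volume : Measure (Fin N → ℝ)).restrict (simplexSet N 1) with hμ
  have hmem : ∀ᵐ s ∂μ, s ∈ simplexSet N 1 := ae_restrict_mem (measurableSet_simplexSet N 1)
  have hstrict : ∀ᵐ s ∂μ, s ∈ simplexSet N 1 ∧ strictP N s := by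
    filter_upwards [hmem, ae_restrict_of_ae (ae_strict N)] with s hs hne
    exact ⟨hs, fun i => lt_of_le_of_ne (hs.2.2 i) (hne.1 i),
      fun i j hij => lt_of_le_of_ne (hs.2.1 i j hij.le) (hne.2 j i hij.ne')⟩
  have hFint : Integrable (Ffun N) μ := by
    refine Integrable.mono' ((integrableOn_gfun N).const_mul (N.factorial : ℝ))
      (measurable_Ffun N).aestronglyMeasurable ?_
    filter_upwards [hstrict] with s hs
    rw [Real.norm_eq_abs, abs_of_nonneg (Ffun_nonneg N s)]
    exact (Ffun_bounds hs.1 hs.2).2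
  have hhint : IntegrableOn (hfun N) (simplexSet N 1) :=
    (integrableOn_hfun_cube N).mono_set (simplex_subset_cube N)
  have hmono : ∫ s, (N.factorial : ℝ) * hfun N s ∂μ ≤ ∫ s, Ffun N s ∂μ := by
    refine integral_mono_ae (hhint.const_mul _) hFint ?_
    filter_upwards [hstrict] with s hs
    exact (Ffun_bounds hs.1 hs.2).1
  calc (2:ℝ)^N ≤ (N.factorial : ℝ) * ∫ s in simplexSet N 1, hfun N s :=
        two_pow_le_factorial_mul_integral N
    _ = ∫ s, (N.factorial : ℝ) * hfun N s ∂μ := (integral_const_mul _ _).symm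
    _ ≤ ∫ s, Ffun N s ∂μ := hmono
    _ = Jfun N 1 := rfl
end

section
/- Define K_0 = 1 and recursively K_N = ∑_{k=1}^N (1/k!) ∑_{n_2+⋯+n_{k+1}=N, n_j≥1} ∏_{j=2}^{k+1} (K_{n_j−1}·√π). Then K_N = (N+1)^N π^{N/2} / (N+1)! for all N ≥ 0. -/
open Finset Polynomial

/-- The set of ordered compositions of `N` into `k` positive parts (each part is at most `N`,
so it is encoded as a function `Fin k → Fin (N+1)`). -/
def compositionsFinset (N k : ℕ) : Finset (Fin k → Fin (N + 1)) :=
  Finset.univ.filter fun c => (∀ j, 1 ≤ (c j : ℕ)) ∧ (∑ j, (c j : ℕ)) = N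


/-- m-th finite difference of a polynomial of degree < m vanishes. -/
lemma fd_zero : ∀ (m : ℕ) (p : Polynomial ℝ), p.natDegree < m →
    ∑ j ∈ range (m+1), (-1:ℝ)^j * (m.choose j) * p.eval (j:ℝ) = 0 := by
  intro m
  induction m with
  | zero => intro p hp; exact absurd hp (Nat.not_lt_zero _)
  | succ m ih =>
    intro p hp
    set q : Polynomial ℝ := p.comp (X + 1) - p with hqdef
    have hqeval : ∀ x : ℝ, q.eval x = p.eval (x+1) - p.eval x := by
      intro x; simp [hqdef]
    have hdeg : q.natDegree < m ∨ (m = 0 ∧ ∃ c, p = C c) := by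
      rcases Nat.eq_zero_or_pos p.natDegree with h0 | h0
      · obtain ⟨c, rfl⟩ := Polynomial.natDegree_eq_zero.mp h0
        have hq0 : q = 0 := by simp [hqdef]
        rcases Nat.eq_zero_or_pos m with hm | hm
        · exact Or.inr ⟨hm, c, rfl⟩
        · exact Or.inl (by rw [hq0]; simpa using hm)
      · left
        have hp0 : p ≠ 0 := fun h => by simp [h] at h0
        have hX1 : (X + 1 : Polynomial ℝ).natDegree = 1 := by
          have := Polynomial.natDegree_X_add_C (1:ℝ); rwa [Polynomial.C_1] at this
        have hcompnd : (p.comp (X + 1)).natDegree = p.natDegree := by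
          rw [Polynomial.natDegree_comp, hX1, mul_one]
        have hlc : (p.comp (X + 1)).leadingCoeff = p.leadingCoeff := by
          rw [Polynomial.leadingCoeff_comp (by rw [hX1]; omega)]
          have : (X + 1 : Polynomial ℝ).leadingCoeff = 1 := by
            have := Polynomial.monic_X_add_C (1:ℝ)
            rw [Polynomial.C_1] at this
            exact this
          rw [this, one_pow, mul_one]
        have hcomp0 : p.comp (X + 1) ≠ 0 := by
          intro h
          exact hp0 (Polynomial.leadingCoeff_eq_zero.mp (by rw [h] at hlc; simpa using hlc.symm))
        have hdegeq : (p.comp (X + 1)).degree = p.degree := by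
          rw [Polynomial.degree_eq_natDegree hp0, Polynomial.degree_eq_natDegree hcomp0, hcompnd]
        have hlt : q.degree < p.degree := by
          have := Polynomial.degree_sub_lt hdegeq hcomp0 hlc
          rwa [← hqdef, hdegeq] at this
        have : q.natDegree < p.natDegree := by
          rcases eq_or_ne q 0 with h | h
          · simpa [h] using h0
          · exact Polynomial.natDegree_lt_natDegree h hlt
        omega
    rcases hdeg with hdeg | ⟨hm0, c, rfl⟩
    · -- main case
      have hih := ih q hdeg
      set S1 := ∑ j ∈ range (m+1), (-1:ℝ)^j * (m.choose j) * p.eval ((j:ℝ)+1) with hS1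
      set S2 := ∑ j ∈ range (m+1), (-1:ℝ)^j * (m.choose j) * p.eval (j:ℝ) with hS2
      have hS : S1 - S2 = 0 := by
        rw [hS1, hS2, ← Finset.sum_sub_distrib, ← hih]
        apply Finset.sum_congr rfl
        intro j hj
        rw [hqeval]
        ring
      rw [Finset.sum_range_succ']
      simp only [Nat.choose_zero_right, Nat.cast_one, pow_zero, one_mul, Nat.cast_zero]
      have key : ∀ j ∈ range (m+1), (-1:ℝ)^(j+1) * (((m+1).choose (j+1) : ℕ) : ℝ) * p.eval ((j+1 : ℕ) : ℝ)
          = -((-1:ℝ)^j * (m.choose j) * p.eval ((j:ℝ)+1))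
            + -((-1:ℝ)^j * (m.choose (j+1)) * p.eval ((j:ℝ)+1)) := by
        intro j hj
        rw [Nat.choose_succ_succ]
        push_cast
        ring
      rw [Finset.sum_congr rfl key, Finset.sum_add_distrib]
      have e1 : ∑ j ∈ range (m+1), -((-1:ℝ)^j * (m.choose j) * p.eval ((j:ℝ)+1)) = -S1 := by
        rw [hS1, ← Finset.sum_neg_distrib]
      have e2 : ∑ j ∈ range (m+1), -((-1:ℝ)^j * (m.choose (j+1)) * p.eval ((j:ℝ)+1))
          = S2 - p.eval 0 := by
        rw [Finset.sum_range_succ]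
        have hz : -((-1:ℝ)^m * (m.choose (m+1)) * p.eval ((m:ℝ)+1)) = 0 := by
          simp [Nat.choose_succ_self]
        rw [hz, add_zero]
        have : S2 = (∑ j ∈ range m, (-1:ℝ)^(j+1) * (m.choose (j+1)) * p.eval (((j+1:ℕ)):ℝ))
            + (-1:ℝ)^0 * (m.choose 0) * p.eval ((0:ℕ):ℝ) := by
          rw [hS2, Finset.sum_range_succ']
        rw [this]
        simp only [Nat.choose_zero_right, Nat.cast_one, pow_zero, one_mul, Nat.cast_zero]
        rw [add_sub_cancel_right]
        apply Finset.sum_congr rfl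
        intro j hj
        push_cast
        ring
      rw [e1, e2]
      linarith [hS]
    · simp [Finset.sum_range_succ, hm0]

/-- Abel's binomial theorem, polynomial form (variable = y). -/
lemma AP_eq : ∀ (n : ℕ) (x : ℝ),
    (X + C ((n:ℕ):ℝ))^n + ∑ k ∈ range n,
      C ((n.choose (k+1):ℝ) * x * (x+(k:ℝ)+1)^k) * (X + C ((n-1-k : ℕ):ℝ))^(n-1-k)
    = (X + C (x + n))^n := by
  intro n
  induction n with
  | zero => intro x; simp
  | succ n ih =>
    intro x
    set L : Polynomial ℝ := (X + C (((n+1:ℕ)):ℝ))^(n+1) + ∑ k ∈ range (n+1),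
      C (((n+1).choose (k+1):ℝ) * x * (x+(k:ℝ)+1)^k) * (X + C ((n+1-1-k : ℕ):ℝ))^(n+1-1-k) with hL
    set R : Polynomial ℝ := (X + C (x + ((n+1:ℕ):ℝ)))^(n+1) with hR
    show L = R
    have hder : derivative L = derivative R := by
      have dR : derivative R = C (((n+1:ℕ)):ℝ) * (X + C (x + ((n+1:ℕ):ℝ)))^n := by
        rw [hR, Polynomial.derivative_X_add_C_pow]
        norm_num
      have dL : derivative L = C (((n+1:ℕ)):ℝ) * (X + C (((n+1:ℕ)):ℝ))^n
          + ∑ k ∈ range (n+1), C (((n+1).choose (k+1):ℝ) * x * (x+(k:ℝ)+1)^k) *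
              (C (((n-k : ℕ)):ℝ) * (X + C ((n-k : ℕ):ℝ))^(n-k-1)) := by
        rw [hL, derivative_add, derivative_sum, Polynomial.derivative_X_add_C_pow]
        rw [Nat.add_sub_cancel]
        congr 1
        apply Finset.sum_congr rfl
        intro k hk
        rw [derivative_mul, derivative_C, zero_mul, zero_add,
          Polynomial.derivative_X_add_C_pow]
      rw [dL, dR]
      -- use ih composed with (X+1)
      have hcomp : ((X + C (x + (n:ℝ)))^n).comp (X + 1) = (X + C (x + ((n+1:ℕ):ℝ)))^n := by
        rw [Polynomial.pow_comp, Polynomial.add_comp, Polynomial.X_comp, Polynomial.C_comp]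
        congr 1
        conv_rhs => rw [show x + ((n+1:ℕ):ℝ) = (x + (n:ℝ)) + 1 by push_cast; ring, map_add, map_one]
        ring
      rw [← hcomp, ← ih x, Polynomial.add_comp, Polynomial.pow_comp, Polynomial.add_comp,
        Polynomial.X_comp, Polynomial.C_comp, Polynomial.sum_comp, mul_add]
      congr 1
      · -- leading terms
        rw [show ((n+1:ℕ):ℝ) = (n:ℝ) + 1 by push_cast; ring, map_add, map_one]
        ring
      · -- sums
        rw [Finset.mul_sum, Finset.sum_range_succ]
        have hzero : C (((n+1).choose (n+1):ℝ) * x * (x+(n:ℝ)+1)^n) *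
            (C (((n-n : ℕ)):ℝ) * (X + C ((n-n : ℕ):ℝ))^(n-n-1)) = 0 := by
          simp
        rw [hzero, add_zero]
        apply Finset.sum_congr rfl
        intro k hk
        rw [Finset.mem_range] at hk
        simp only [Polynomial.mul_comp, Polynomial.pow_comp, Polynomial.add_comp,
          Polynomial.X_comp, Polynomial.C_comp]
        have e1 : n - k - 1 = n - 1 - k := by omega
        have e2 : ((n-1-k : ℕ):ℝ) + 1 = ((n-k : ℕ):ℝ) := by
          have h' : (n-1-k) + 1 = n - k := by omega
          rw [← h']; push_cast; ring
        have ebase : (X : Polynomial ℝ) + 1 + C ((n-1-k:ℕ):ℝ)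
            = X + C ((n-k:ℕ):ℝ) := by
          rw [← e2, map_add, map_one]; ring
        have e3 : (((n+1).choose (k+1):ℕ):ℝ) * ((n-k:ℕ):ℝ)
            = (((n+1:ℕ)):ℝ) * ((n.choose (k+1):ℕ):ℝ) := by
          have hnat : (n+1).choose (k+1) * (n-k) = (n+1) * n.choose (k+1) := by
            apply Nat.eq_of_mul_eq_mul_right (Nat.succ_pos k)
            have i1 : n.choose (k+1) * (k+1) = n.choose k * (n - k) := Nat.choose_succ_right_eq n k
            have i2 : (n+1) * n.choose k = (n+1).choose (k+1) * (k+1) := Nat.add_one_mul_choose_eq n k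
            calc (n+1).choose (k+1) * (n-k) * (k+1)
                = ((n+1).choose (k+1) * (k+1)) * (n-k) := by ring
              _ = ((n+1) * n.choose k) * (n-k) := by rw [← i2]
              _ = (n+1) * (n.choose k * (n-k)) := by ring
              _ = (n+1) * (n.choose (k+1) * (k+1)) := by rw [← i1]
              _ = (n+1) * n.choose (k+1) * (k+1) := by ring
          exact_mod_cast congrArg (fun t : ℕ => (t:ℝ)) hnat
        rw [e1, ebase, ← mul_assoc, ← mul_assoc, ← C_mul, ← C_mul]
        congr 2
        calc ((n+1).choose (k+1):ℝ) * x * (x+(k:ℝ)+1)^k * ((n-k:ℕ):ℝ)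
            = (((n+1).choose (k+1):ℝ) * ((n-k:ℕ):ℝ)) * (x * (x+(k:ℝ)+1)^k) := by ring
          _ = ((((n+1:ℕ)):ℝ) * ((n.choose (k+1):ℕ):ℝ)) * (x * (x+(k:ℝ)+1)^k) := by rw [e3]
          _ = (((n+1:ℕ)):ℝ) * ((n.choose (k+1):ℝ) * x * (x+(k:ℝ)+1)^k) := by ring
    -- now derivative equal ⇒ difference constant; evaluate at -(x+n+1)
    have hdiff : derivative (L - R) = 0 := by rw [derivative_sub, hder, sub_self]
    have hconst := Polynomial.eq_C_of_derivative_eq_zero hdiff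
    have heval : (L - R).eval (-(x + ((n+1:ℕ):ℝ))) = 0 := by
      rw [eval_sub]
      have hRe : R.eval (-(x + ((n+1:ℕ):ℝ))) = 0 := by
        rw [hR, eval_pow, eval_add, eval_X, eval_C]
        rw [show -(x + ((n+1:ℕ):ℝ)) + (x + ((n+1:ℕ):ℝ)) = 0 by ring]
        exact zero_pow (Nat.succ_ne_zero n)
      have hLe : L.eval (-(x + ((n+1:ℕ):ℝ)))
          = (-x)^(n+1) + ∑ k ∈ range (n+1), (((n+1).choose (k+1):ℕ):ℝ) * x * (x+(k:ℝ)+1)^k *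
              (-(x+(k:ℝ)+1))^(n-k) := by
        rw [hL]
        rw [eval_add, eval_pow, eval_add, eval_X, eval_C, eval_finset_sum]
        congr 1
        · rw [show -(x + ((n+1:ℕ):ℝ)) + ((n+1:ℕ):ℝ) = -x by ring]
        · apply Finset.sum_congr rfl
          intro k hk
          rw [Finset.mem_range] at hk
          have e : n+1-1-k = n-k := by omega
          rw [e, eval_mul, eval_C, eval_pow, eval_add, eval_X, eval_C]
          have e2 : -(x + ((n+1:ℕ):ℝ)) + ((n-k : ℕ):ℝ) = -(x+(k:ℝ)+1) := by
            have hkn : k ≤ n := by omega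
            rw [Nat.cast_sub hkn]; push_cast; ring
          rw [e2]
      rw [hRe, hLe, sub_zero]
      -- use fd_zero with p = (C x + X)^n, m = n+1
      have hfd := fd_zero (n+1) ((C x + X)^n) (by
        rw [Polynomial.natDegree_pow]
        have hd : (C x + X : Polynomial ℝ).natDegree = 1 := by
          rw [add_comm]; exact Polynomial.natDegree_X_add_C x
        rw [hd, mul_one]; omega)
      have hfd' : ∑ j ∈ range (n+1+1), (-1:ℝ)^j * (((n+1).choose j :ℕ):ℝ) * (x+(j:ℝ))^n = 0 := by
        rw [← hfd]
        apply Finset.sum_congr rfl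
        intro j hj
        rw [eval_pow, eval_add, eval_C, eval_X]
      have h0 : x * (-1:ℝ)^(n+1) *
          ∑ j ∈ range (n+1+1), (-1:ℝ)^j * (((n+1).choose j:ℕ):ℝ) * (x+(j:ℝ))^n = 0 := by
        rw [hfd', mul_zero]
      rw [Finset.mul_sum, Finset.sum_range_succ'] at h0
      rw [← h0, add_comm]
      congr 1
      · apply Finset.sum_congr rfl
        intro k hk
        rw [Finset.mem_range] at hk
        have hcast : (x + (((k+1):ℕ):ℝ)) = x + (k:ℝ) + 1 := by push_cast; ring
        have hsgn : (-(x+(k:ℝ)+1))^(n-k) = (-1:ℝ)^(n-k) * (x+(k:ℝ)+1)^(n-k) := by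
          rw [← neg_one_mul, mul_pow]
        have hsgn2 : (-1:ℝ)^(n+1) * (-1:ℝ)^(k+1) = (-1:ℝ)^(n-k) := by
          have he : n + 1 + (k + 1) = (n - k) + 2*(k+1) := by omega
          rw [← pow_add, he, pow_add]
          have : ((-1:ℝ)^2)^(k+1) = 1 := by norm_num
          rw [pow_mul, this, mul_one]
        have hpow : (x+(k:ℝ)+1)^k * (x+(k:ℝ)+1)^(n-k) = (x+(k:ℝ)+1)^n := by
          rw [← pow_add]
          congr 1
          omega
        rw [hsgn, hcast, ← hsgn2, ← hpow]
        ring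
      · rw [show ((0:ℕ):ℝ) = (0:ℝ) by norm_num]
        rw [show (-x)^(n+1) = (-1:ℝ)^(n+1) * x^(n+1) by rw [← neg_one_mul, mul_pow]]
        simp only [pow_zero, Nat.choose_zero_right, Nat.cast_one, add_zero]
        ring
    have hc : (L - R).coeff 0 = 0 := by
      rw [hconst] at heval; rwa [eval_C] at heval
    have : L - R = 0 := by rw [hconst, hc, map_zero]
    exact sub_eq_zero.mp this

lemma choose_sub_mul (n k : ℕ) : (n+1).choose (k+1) * (n-k) = (n+1) * n.choose (k+1) := by
  apply Nat.eq_of_mul_eq_mul_right (Nat.succ_pos k)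
  have i1 : n.choose (k+1) * (k+1) = n.choose k * (n - k) := Nat.choose_succ_right_eq n k
  have i2 : (n+1) * n.choose k = (n+1).choose (k+1) * (k+1) := Nat.add_one_mul_choose_eq n k
  calc (n+1).choose (k+1) * (n-k) * (k+1)
      = ((n+1).choose (k+1) * (k+1)) * (n-k) := by ring
    _ = ((n+1) * n.choose k) * (n-k) := by rw [← i2]
    _ = (n+1) * (n.choose k * (n-k)) := by ring
    _ = (n+1) * (n.choose (k+1) * (k+1)) := by rw [← i1]
    _ = (n+1) * n.choose (k+1) * (k+1) := by ring

lemma choose_sub_mul_real (n k : ℕ) :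
    ((n+1).choose (k+1) : ℝ) * ((n-k:ℕ):ℝ) = ((n+1:ℕ):ℝ) * (n.choose (k+1) : ℝ) := by
  exact_mod_cast congrArg (fun t : ℕ => (t:ℝ)) (choose_sub_mul n k)

/-- Abel's binomial theorem (evaluated form). -/
lemma abelA (n : ℕ) (x y : ℝ) :
    (y+(n:ℝ))^n + ∑ k ∈ range n,
      (n.choose (k+1):ℝ) * x * (x+(k:ℝ)+1)^k * (y + ((n-1-k:ℕ):ℝ))^(n-1-k)
    = (x+y+(n:ℝ))^n := by
  have h := congrArg (Polynomial.eval y) (AP_eq n x)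
  simp only [eval_add, eval_pow, eval_X, eval_C, eval_finset_sum, eval_mul] at h
  rw [show x + y + (n:ℝ) = y + (x + (n:ℝ)) by ring]
  exact h

/-- Abel "forest" variant. -/
lemma abelF (m : ℕ) (x y : ℝ) :
    y*(y+((m+1:ℕ):ℝ))^m
      + (∑ k ∈ range m, (((m+1).choose (k+1):ℕ):ℝ) * x * (x+(k:ℝ)+1)^k * y *
          (y+((m-1-k:ℕ):ℝ)+1)^(m-1-k))
      + x*(x+((m+1:ℕ):ℝ))^m
    = (x+y)*(x+y+((m+1:ℕ):ℝ))^m := by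
  have hA1 := abelA (m+1) x y
  have hA2 := abelA m x (y+1)
  simp only [Nat.add_sub_cancel] at hA1
  rw [Finset.sum_range_succ] at hA1
  simp only [Nat.sub_self, Nat.choose_self, pow_zero, Nat.cast_zero, Nat.cast_one, add_zero,
    mul_one, one_mul] at hA1
  -- hA1 : (y+↑(m+1))^(m+1) + (∑_{range m} A1 k + x*(x+↑m+1)^m) = (x+y+↑(m+1))^(m+1)
  have hsum : (∑ k ∈ range m, (((m+1).choose (k+1):ℕ):ℝ) * x * (x+(k:ℝ)+1)^k * y *
          (y+((m-1-k:ℕ):ℝ)+1)^(m-1-k))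
      = (∑ k ∈ range m, ((m+1).choose (k+1):ℝ) * x * (x+(k:ℝ)+1)^k *
            (y + ((m-k:ℕ):ℝ))^(m-k))
        - ((m+1:ℕ):ℝ) * ∑ k ∈ range m, (m.choose (k+1):ℝ) * x * (x+(k:ℝ)+1)^k *
            ((y+1) + ((m-1-k:ℕ):ℝ))^(m-1-k) := by
    rw [Finset.mul_sum, ← Finset.sum_sub_distrib]
    apply Finset.sum_congr rfl
    intro k hk
    rw [Finset.mem_range] at hk
    have hb : ((m-k:ℕ):ℝ) = ((m-1-k:ℕ):ℝ) + 1 := by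
      have h' : (m-1-k) + 1 = m - k := by omega
      rw [← h']; push_cast; ring
    have hp : (y+((m-1-k:ℕ):ℝ)+1)^(m-k)
        = (y+((m-1-k:ℕ):ℝ)+1)^(m-1-k) * (y+((m-1-k:ℕ):ℝ)+1) := by
      rw [← pow_succ]; congr 1; omega
    have hc' : ((m+1:ℕ):ℝ) * (m.choose (k+1):ℝ)
        = ((m+1).choose (k+1):ℝ) * (((m-1-k:ℕ):ℝ)+1) := by
      rw [← hb]; exact (choose_sub_mul_real m k).symm
    rw [hb]
    rw [show y + ((((m-1-k:ℕ)):ℝ) + 1) = y + ((m-1-k:ℕ):ℝ) + 1 by ring]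
    rw [show (y+1) + (((m-1-k:ℕ)):ℝ) = y + ((m-1-k:ℕ):ℝ) + 1 by ring]
    rw [hp]
    linear_combination (x * (x+(k:ℝ)+1)^k * (y+((m-1-k:ℕ):ℝ)+1)^(m-1-k)) * hc'
  rw [hsum]
  have hcast : x + (y+1) + (m:ℝ) = x + y + ((m+1:ℕ):ℝ) := by push_cast; ring
  have expand : y*(y+((m+1:ℕ):ℝ))^m
      + ((∑ k ∈ range m, ((m+1).choose (k+1):ℝ) * x * (x+(k:ℝ)+1)^k *
            (y + ((m-k:ℕ):ℝ))^(m-k))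
        - ((m+1:ℕ):ℝ) * ∑ k ∈ range m, (m.choose (k+1):ℝ) * x * (x+(k:ℝ)+1)^k *
            ((y+1) + ((m-1-k:ℕ):ℝ))^(m-1-k))
      + x*(x+((m+1:ℕ):ℝ))^m
      = ((y+((m+1:ℕ):ℝ))^(m+1) + ((∑ k ∈ range m, ((m+1).choose (k+1):ℝ) * x * (x+(k:ℝ)+1)^k *
            (y + ((m-k:ℕ):ℝ))^(m-k)) + x*(x+(m:ℝ)+1)^m))
        - ((m+1:ℕ):ℝ) * (((y+1)+(m:ℝ))^m + ∑ k ∈ range m, (m.choose (k+1):ℝ) * x * (x+(k:ℝ)+1)^k *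
            ((y+1) + ((m-1-k:ℕ):ℝ))^(m-1-k)) := by
    rw [pow_succ]
    push_cast
    ring
  rw [expand, hA1, hA2, hcast, pow_succ]
  push_cast
  ring

/-- Cauchy's variant. -/
lemma abelG : ∀ (n : ℕ) (x y : ℝ),
    (x+(n:ℝ))^n + ∑ k ∈ range n,
      (n.choose k:ℝ) * (x+(k:ℝ))^k * y * (y+((n-1-k:ℕ):ℝ)+1)^(n-1-k)
    = (x+y+(n:ℝ))^n := by
  intro n
  induction n with
  | zero => intro x y; simp
  | succ m ih =>
    intro x y
    rw [Finset.sum_range_succ']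
    -- k=0 term
    have h0 : ((m+1).choose 0:ℝ) * (x+((0:ℕ):ℝ))^0 * y * (y+((m+1-1-0:ℕ):ℝ)+1)^(m+1-1-0)
        = y * (y+((m+1:ℕ):ℝ))^m := by
      simp only [Nat.choose_zero_right, Nat.cast_one, pow_zero, one_mul, mul_one,
        Nat.add_sub_cancel, Nat.sub_zero, Nat.cast_zero]
      rw [show ((m+1:ℕ):ℝ) = (m:ℝ)+1 by push_cast; ring]
      ring
    rw [h0]
    have hterm : ∀ k ∈ range m,
        ((m+1).choose (k+1):ℝ) * (x+((k+1:ℕ):ℝ))^(k+1) * y * (y+((m+1-1-(k+1):ℕ):ℝ)+1)^(m+1-1-(k+1))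
        = (((m+1).choose (k+1):ℕ):ℝ) * x * (x+(k:ℝ)+1)^k * y * (y+((m-1-k:ℕ):ℝ)+1)^(m-1-k)
          + ((m+1:ℕ):ℝ) * ((m.choose k:ℝ) * ((x+1)+(k:ℝ))^k * y * (y+((m-1-k:ℕ):ℝ)+1)^(m-1-k)) := by
      intro k hk
      have he : m+1-1-(k+1) = m-1-k := by omega
      have hc : ((m+1).choose (k+1):ℝ) * ((k:ℝ)+1) = ((m+1:ℕ):ℝ) * (m.choose k:ℝ) := by
        have := Nat.add_one_mul_choose_eq m k
        have h2 := congrArg (fun t : ℕ => (t:ℝ)) this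
        push_cast at h2
        push_cast
        linarith [h2]
      have hpow : (x+((k+1:ℕ):ℝ))^(k+1) = (x+(k:ℝ)+1)^k * (x + (k:ℝ) + 1) := by
        rw [pow_succ]
        push_cast
        ring_nf
      rw [he, hpow]
      calc ((m+1).choose (k+1):ℝ) * ((x+(k:ℝ)+1)^k * (x + (k:ℝ) + 1)) * y *
              (y+((m-1-k:ℕ):ℝ)+1)^(m-1-k)
          = (((m+1).choose (k+1):ℕ):ℝ) * x * (x+(k:ℝ)+1)^k * y * (y+((m-1-k:ℕ):ℝ)+1)^(m-1-k)
            + (((m+1).choose (k+1):ℝ) * ((k:ℝ)+1)) * ((x+1)+(k:ℝ))^k * y *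
                (y+((m-1-k:ℕ):ℝ)+1)^(m-1-k) := by
            rw [show ((x:ℝ)+1)+(k:ℝ) = x+(k:ℝ)+1 by ring]
            push_cast
            ring
        _ = _ := by rw [hc]; ring
    rw [Finset.sum_congr rfl hterm, Finset.sum_add_distrib, ← Finset.mul_sum]
    have hlead : (x+((m+1:ℕ):ℝ))^(m+1)
        = x * (x+((m+1:ℕ):ℝ))^m + ((m+1:ℕ):ℝ) * ((x+1)+(m:ℝ))^m := by
      rw [pow_succ]
      push_cast
      ring
    rw [hlead]
    have hF := abelF m x y
    have hG := ih (x+1) y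
    -- combine
    calc x * (x+((m+1:ℕ):ℝ))^m + ((m+1:ℕ):ℝ) * ((x+1)+(m:ℝ))^m
          + ((∑ k ∈ range m, (((m+1).choose (k+1):ℕ):ℝ) * x * (x+(k:ℝ)+1)^k * y *
              (y+((m-1-k:ℕ):ℝ)+1)^(m-1-k))
            + ((m+1:ℕ):ℝ) * (∑ k ∈ range m, (m.choose k:ℝ) * ((x+1)+(k:ℝ))^k * y *
              (y+((m-1-k:ℕ):ℝ)+1)^(m-1-k))
            + y * (y+((m+1:ℕ):ℝ))^m)
        = (y*(y+((m+1:ℕ):ℝ))^m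
            + (∑ k ∈ range m, (((m+1).choose (k+1):ℕ):ℝ) * x * (x+(k:ℝ)+1)^k * y *
                (y+((m-1-k:ℕ):ℝ)+1)^(m-1-k))
            + x*(x+((m+1:ℕ):ℝ))^m)
          + ((m+1:ℕ):ℝ) * (((x+1)+(m:ℝ))^m + ∑ k ∈ range m, (m.choose k:ℝ) * ((x+1)+(k:ℝ))^k * y *
              (y+((m-1-k:ℕ):ℝ)+1)^(m-1-k)) := by ring
      _ = (x+y)*(x+y+((m+1:ℕ):ℝ))^m + ((m+1:ℕ):ℝ) * ((x+1)+y+(m:ℝ))^m := by rw [hF, hG]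
      _ = (x+y+((m+1:ℕ):ℝ))^(m+1) := by
          rw [pow_succ, show ((x:ℝ)+1)+y+(m:ℝ) = x+y+((m+1:ℕ):ℝ) by push_cast; ring]
          ring

noncomputable def tt (m : ℕ) : ℝ := (m:ℝ)^(m-1) / (m.factorial)
noncomputable def ff (j : ℕ) : ℝ := ((j:ℝ)+1)^j / ((j+1).factorial)

lemma ff_zero : ff 0 = 1 := by simp [ff]

lemma identityW (n : ℕ) :
    ∑ m ∈ Icc 1 (n+1), (m:ℝ) * tt m * ff (n+1-m) = ((n+1:ℕ):ℝ) * ff (n+1) := by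
  have hG := abelG n 1 1
  rw [← Finset.Ico_add_one_right_eq_Icc, Finset.sum_Ico_eq_sum_range]
  rw [show n + 1 + 1 - 1 = n + 1 from rfl]
  rw [Finset.sum_range_succ]
  have hterm : ∀ i ∈ range n, ((1+i:ℕ):ℝ) * tt (1+i) * ff (n+1-(1+i))
      = ((n.choose i:ℝ) * (1+(i:ℝ))^i * 1 * (1+((n-1-i:ℕ):ℝ)+1)^(n-1-i)) / (n.factorial:ℝ) := by
    intro i hi
    rw [Finset.mem_range] at hi
    have hin : i ≤ n := le_of_lt hi
    have e0 : 1 + i = i + 1 := Nat.add_comm 1 i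
    have e1 : n + 1 - (1 + i) = n - i := by omega
    have e2 : n - i = (n-1-i) + 1 := by omega
    rw [e1, e0, e2]
    simp only [tt, ff, Nat.add_sub_cancel]
    have hfact : ((n.choose i : ℕ):ℝ) * (i.factorial:ℝ) * ((((n-1-i)+1).factorial:ℕ):ℝ)
        = (n.factorial:ℝ) := by
      have h := Nat.choose_mul_factorial_mul_factorial hin
      rw [← e2] at *
      exact_mod_cast congrArg (fun t : ℕ => (t:ℝ)) h
    rw [← hfact]
    rw [Nat.factorial_succ ((n-1-i)+1), Nat.factorial_succ (n-1-i), Nat.factorial_succ i,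
      pow_succ]
    have hch : (0:ℝ) < (n.choose i : ℝ) := by
      exact_mod_cast Nat.choose_pos hin
    have hf1 : ((i.factorial:ℕ):ℝ) ≠ 0 := by exact_mod_cast (Nat.factorial_pos i).ne'
    have hf2 : (((n-1-i).factorial:ℕ):ℝ) ≠ 0 := by exact_mod_cast (Nat.factorial_pos _).ne'
    push_cast
    field_simp
    ring
  rw [Finset.sum_congr rfl hterm, ← Finset.sum_div]
  have hGsum : ∑ k ∈ range n, (n.choose k:ℝ) * (1+(k:ℝ))^k * 1 * (1+((n-1-k:ℕ):ℝ)+1)^(n-1-k)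
      = (1+1+(n:ℝ))^n - (1+(n:ℝ))^n := by linarith [hG]
  rw [hGsum]
  rw [show (1:ℕ) + n = n + 1 from Nat.add_comm 1 n, Nat.sub_self, ff_zero]
  simp only [tt, ff, Nat.add_sub_cancel]
  rw [Nat.factorial_succ (n+1), Nat.factorial_succ n]
  have hf1 : ((n.factorial:ℕ):ℝ) ≠ 0 := by exact_mod_cast (Nat.factorial_pos n).ne'
  push_cast
  field_simp
  ring

lemma mem_comps {N k : ℕ} {c : Fin k → Fin (N+1)} :
    c ∈ compositionsFinset N k ↔ (∀ j, 1 ≤ (c j : ℕ)) ∧ (∑ j, (c j : ℕ)) = N := by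
  simp [compositionsFinset]

lemma comps_empty {N k : ℕ} (h : N < k) : compositionsFinset N k = ∅ := by
  ext c
  simp only [mem_comps, Finset.notMem_empty, iff_false]
  rintro ⟨h1, h2⟩
  have : (k:ℕ) ≤ ∑ j : Fin k, (c j : ℕ) := by
    calc (k:ℕ) = ∑ _j : Fin k, 1 := by simp
    _ ≤ ∑ j : Fin k, (c j : ℕ) := Finset.sum_le_sum (fun j _ => h1 j)
  omega

lemma comps_zero_zero (v : ℕ → ℝ) : ∑ c ∈ compositionsFinset 0 0, ∏ j, v ((c j : ℕ)) = 1 := by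
  have h : compositionsFinset 0 0 = Finset.univ := by
    ext c
    simp [mem_comps]
    funext j
    exact j.elim0
  rw [h]
  rw [Finset.sum_congr rfl (fun c _ => by
    rw [show (∏ j, v ((c j : ℕ))) = 1 from Finset.prod_of_isEmpty _])]
  simp

/-- Stripping the first part of a composition. -/
lemma strip (N k : ℕ) (u v : ℕ → ℝ) :
    ∑ c ∈ compositionsFinset N (k+1), (u ((c 0 : ℕ)) * ∏ j : Fin k, v ((c j.succ : ℕ)))
    = ∑ m ∈ Icc 1 N, u m * ∑ c ∈ compositionsFinset (N-m) k, ∏ j : Fin k, v ((c j : ℕ)) := by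
  have hmap : ∀ c ∈ compositionsFinset N (k+1), (fun c : Fin (k+1) → Fin (N+1) => (c 0 : ℕ)) c ∈ Icc 1 N := by
    intro c hc
    rw [mem_comps] at hc
    rw [Finset.mem_Icc]
    constructor
    · exact hc.1 0
    · calc (c 0 : ℕ) ≤ ∑ j, (c j : ℕ) :=
        Finset.single_le_sum (f := fun j => (c j : ℕ)) (fun i _ => Nat.zero_le _) (Finset.mem_univ 0)
      _ = N := hc.2
  rw [← Finset.sum_fiberwise_of_maps_to hmap
    (fun c => u ((c 0 : ℕ)) * ∏ j : Fin k, v ((c j.succ : ℕ)))]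
  apply Finset.sum_congr rfl
  intro m hm
  rw [Finset.mem_Icc] at hm
  rw [Finset.mul_sum]
  -- facts about members of the fiber
  have hfib : ∀ c ∈ (compositionsFinset N (k+1)).filter
      (fun c => (fun c : Fin (k+1) → Fin (N+1) => (c 0 : ℕ)) c = m),
      (∀ j, 1 ≤ (c j : ℕ)) ∧ (c 0 : ℕ) = m ∧ (∑ j : Fin k, (c j.succ : ℕ)) = N - m := by
    intro c hc
    rw [Finset.mem_filter, mem_comps] at hc
    obtain ⟨⟨h1, h2⟩, h3⟩ := hc
    refine ⟨h1, h3, ?_⟩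
    rw [Fin.sum_univ_succ] at h2
    simp only at h3
    omega
  apply Finset.sum_bij' (i := fun (c : Fin (k+1) → Fin (N+1)) hc (j : Fin k) =>
      (⟨(c j.succ : ℕ), by
        have h2 := (hfib c hc).2.2
        have hle := Finset.single_le_sum (f := fun j : Fin k => ((c j.succ : ℕ)))
          (fun i _ => Nat.zero_le _) (Finset.mem_univ j)
        omega⟩ : Fin (N-m+1)))
    (j := fun (c : Fin k → Fin (N-m+1)) hc =>
      Fin.cons (⟨m, by omega⟩ : Fin (N+1)) (fun j => (⟨(c j : ℕ), by
        have := (c j).2; omega⟩ : Fin (N+1))))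
  case hi =>
    intro c hc
    rw [mem_comps]
    constructor
    · intro j
      exact (hfib c hc).1 j.succ
    · exact (hfib c hc).2.2
  case hj =>
    intro c hc
    rw [mem_comps] at hc
    rw [Finset.mem_filter, mem_comps]
    refine ⟨⟨?_, ?_⟩, ?_⟩
    · intro j
      refine Fin.cases ?_ ?_ j
      · rw [Fin.cons_zero]
        exact hm.1
      · intro i
        rw [Fin.cons_succ]
        exact hc.1 i
    · rw [Fin.sum_univ_succ]
      simp only [Fin.cons_zero, Fin.cons_succ]
      have := hc.2
      omega
    · simp only [Fin.cons_zero]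
  case left_neg =>
    intro c hc
    funext j
    refine Fin.cases ?_ ?_ j
    · rw [Fin.cons_zero]
      exact Fin.ext ((hfib c hc).2.1).symm
    · intro i
      rw [Fin.cons_succ]
  case right_neg =>
    intro c hc
    funext j
    apply Fin.ext
    simp
  case h =>
    intro c hc
    have h1 : u ((c 0:ℕ)) = u m := by rw [(hfib c hc).2.1]
    rw [h1]

lemma ff_zero' : ff 0 = 1 := by simp [ff]

lemma symm_comp (N k : ℕ) (v : ℕ → ℝ) (i : Fin (k+1)) :
    ∑ c ∈ compositionsFinset N (k+1), ((c i : ℕ):ℝ) * ∏ j, v ((c j : ℕ))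
    = ∑ c ∈ compositionsFinset N (k+1), ((c 0 : ℕ):ℝ) * ∏ j, v ((c j : ℕ)) := by
  classical
  set e := Equiv.swap (0 : Fin (k+1)) i with he
  have hmem : ∀ c : Fin (k+1) → Fin (N+1), c ∈ compositionsFinset N (k+1) →
      (c ∘ e) ∈ compositionsFinset N (k+1) := by
    intro c hc
    rw [mem_comps] at hc ⊢
    constructor
    · intro j; exact hc.1 (e j)
    · calc ∑ j, (((c ∘ e) j) : ℕ) = ∑ j, (c j : ℕ) := Equiv.sum_comp e (fun j => (c j : ℕ))
        _ = N := hc.2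
  apply Finset.sum_nbij' (i := fun c => c ∘ e) (j := fun c => c ∘ e)
  · exact fun c hc => hmem c hc
  · exact fun c hc => hmem c hc
  · intro c _
    funext x
    simp [he, Function.comp, Equiv.swap_apply_self]
  · intro c _
    funext x
    simp [he, Function.comp, Equiv.swap_apply_self]
  · intro c _
    have h0 : ((c ∘ e) 0 : ℕ) = (c i : ℕ) := by
      simp [he, Function.comp, Equiv.swap_apply_left]
    rw [Function.comp] at h0 ⊢
    rw [h0]
    congr 1
    exact (Equiv.prod_comp e (fun j => v ((c j : ℕ)))).symm

noncomputable def cSum (N k : ℕ) : ℝ := ∑ c ∈ compositionsFinset N k, ∏ j, tt ((c j : ℕ))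
noncomputable def EE (N : ℕ) : ℝ := ∑ k ∈ range (N+1), ((k.factorial:ℝ))⁻¹ * cSum N k

lemma CC_empty {N k : ℕ} (h : N < k) : cSum N k = 0 := by
  rw [cSum, comps_empty h, Finset.sum_empty]

lemma CC_pos_zero {N : ℕ} (h : 1 ≤ N) : cSum N 0 = 0 := by
  rw [cSum]
  rw [show compositionsFinset N 0 = ∅ from by
    ext c
    simp only [mem_comps, Finset.notMem_empty, iff_false]
    rintro ⟨-, h2⟩
    rw [Finset.univ_eq_empty, Finset.sum_empty] at h2
    omega]
  simp

lemma EE_zero : EE 0 = 1 := by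
  rw [EE, show (0:ℕ)+1 = 1 from rfl, Finset.sum_range_one]
  simp only [Nat.factorial_zero, Nat.cast_one, inv_one, one_mul]
  rw [cSum]
  exact comps_zero_zero tt

lemma NCC (N k : ℕ) : (N:ℝ) * cSum N (k+1)
    = ((k+1:ℕ):ℝ) * ∑ m ∈ Icc 1 N, ((m:ℝ) * tt m) * cSum (N-m) k := by
  have h1 : (N:ℝ) * cSum N (k+1) = ∑ i : Fin (k+1), ∑ c ∈ compositionsFinset N (k+1),
      ((c i : ℕ):ℝ) * ∏ j, tt ((c j : ℕ)) := by
    rw [Finset.sum_comm, cSum, Finset.mul_sum]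
    apply Finset.sum_congr rfl
    intro c hc
    rw [mem_comps] at hc
    rw [← Finset.sum_mul]
    congr 1
    exact_mod_cast hc.2.symm
  rw [h1]
  rw [Finset.sum_congr rfl (fun (i : Fin (k+1)) (_ : i ∈ Finset.univ) => symm_comp N k tt i)]
  rw [Finset.sum_const, Finset.card_univ, Fintype.card_fin, nsmul_eq_mul]
  congr 1
  have h2 : ∀ c ∈ compositionsFinset N (k+1),
      ((c 0 : ℕ):ℝ) * ∏ j, tt ((c j : ℕ))
      = (fun m : ℕ => (m:ℝ) * tt m) ((c 0 : ℕ)) * ∏ j : Fin k, tt ((c j.succ : ℕ)) := by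
    intro c _
    rw [Fin.prod_univ_succ]
    ring
  rw [Finset.sum_congr rfl h2, strip N k (fun m : ℕ => (m:ℝ) * tt m) tt]
  apply Finset.sum_congr rfl
  intro m _
  rw [cSum]

lemma EErec {N : ℕ} (hN : 1 ≤ N) :
    (N:ℝ) * EE N = ∑ m ∈ Icc 1 N, ((m:ℝ) * tt m) * EE (N-m) := by
  rw [EE, Finset.mul_sum, Finset.sum_range_succ']
  have h0 : (N:ℝ) * ((((Nat.factorial 0:ℕ):ℝ))⁻¹ * cSum N 0) = 0 := by
    rw [CC_pos_zero hN]; ring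
  rw [h0, add_zero]
  have hterm : ∀ k ∈ range N, (N:ℝ) * ((((k+1).factorial:ℕ):ℝ)⁻¹ * cSum N (k+1))
      = ∑ m ∈ Icc 1 N, ((k.factorial:ℝ))⁻¹ * (((m:ℝ) * tt m) * cSum (N-m) k) := by
    intro k _
    have h := NCC N k
    have hk1 : ((k+1:ℕ):ℝ) ≠ 0 := by positivity
    have hkf : ((k.factorial:ℕ):ℝ) ≠ 0 := by
      exact_mod_cast (Nat.factorial_pos k).ne'
    rw [← Finset.mul_sum]
    calc (N:ℝ) * ((((k+1).factorial:ℕ):ℝ)⁻¹ * cSum N (k+1))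
        = ((((k+1).factorial:ℕ):ℝ))⁻¹ * ((N:ℝ) * cSum N (k+1)) := by ring
      _ = ((((k+1).factorial:ℕ):ℝ))⁻¹ * (((k+1:ℕ):ℝ) *
            ∑ m ∈ Icc 1 N, ((m:ℝ) * tt m) * cSum (N-m) k) := by rw [h]
      _ = ((k.factorial:ℝ))⁻¹ * ∑ m ∈ Icc 1 N, ((m:ℝ) * tt m) * cSum (N-m) k := by
          rw [Nat.factorial_succ]
          push_cast
          field_simp
  rw [Finset.sum_congr rfl hterm, Finset.sum_comm]
  apply Finset.sum_congr rfl
  intro m hm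
  rw [Finset.mem_Icc] at hm
  have hsub : ∑ k ∈ range N, ((k.factorial:ℝ))⁻¹ * cSum (N-m) k = EE (N-m) := by
    rw [EE]
    refine (Finset.sum_subset (Finset.range_subset_range.mpr (by omega)) ?_).symm
    intro k hk hnk
    rw [Finset.mem_range] at hk hnk
    rw [CC_empty (by omega), mul_zero]
  rw [← hsub, Finset.mul_sum]
  apply Finset.sum_congr rfl
  intro k _
  ring

lemma EE_eq : ∀ N, EE N = ff N := by
  intro N
  induction N using Nat.strong_induction_on with
  | _ N ih =>
    match N with
    | 0 => rw [EE_zero, ff_zero']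
    | (n+1) =>
      have hrec := EErec (N := n+1) (by omega)
      have hIH : ∀ m ∈ Icc 1 (n+1), ((m:ℝ) * tt m) * EE (n+1-m) = (m:ℝ) * tt m * ff (n+1-m) := by
        intro m hm
        rw [Finset.mem_Icc] at hm
        rw [ih (n+1-m) (by omega)]
      rw [Finset.sum_congr rfl hIH, identityW n] at hrec
      have hN : ((n+1:ℕ):ℝ) ≠ 0 := by positivity
      have hN : ((n:ℝ)+1) ≠ 0 := by positivity
      push_cast at hrec
      exact mul_left_cancel₀ hN hrec

lemma rpow_half_nat (N : ℕ) : Real.pi ^ ((N:ℝ)/2) = (Real.sqrt Real.pi) ^ N := by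
  rw [Real.sqrt_eq_rpow, ← Real.rpow_natCast (Real.pi ^ ((1:ℝ)/2)) N,
    ← Real.rpow_mul Real.pi_pos.le]
  congr 1
  ring

/-- if `K 0 = 1` and
`K N = ∑_{k=1}^N (1/k!) ∑_{n_2+⋯+n_{k+1}=N, n_j ≥ 1} ∏_{j=2}^{k+1} (K (n_j - 1) · √π)`
for all `N ≥ 1`, then `K N = (N+1)^N π^{N/2} / (N+1)!` for all `N`. -/
theorem K_closed_form (K : ℕ → ℝ) (hK0 : K 0 = 1)
    (hKrec : ∀ N : ℕ, 1 ≤ N →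
      K N = ∑ k ∈ Finset.Icc 1 N, ((k.factorial : ℝ))⁻¹ *
        ∑ c ∈ compositionsFinset N k, ∏ j : Fin k, (K ((c j : ℕ) - 1) * Real.sqrt Real.pi)) :
    ∀ N : ℕ, K N = ((N : ℝ) + 1) ^ N * Real.pi ^ ((N : ℝ) / 2) / ((N + 1).factorial : ℝ) := by
  have hmain : ∀ N, K N = ff N * (Real.sqrt Real.pi)^N := by
    intro N
    induction N using Nat.strong_induction_on with
    | _ N ih =>
      match N with
      | 0 =>
        rw [hK0, ff_zero']
        simp
      | (n+1) =>
        rw [hKrec (n+1) (by omega)]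
        have hprod : ∀ k, 1 ≤ k → ∀ c ∈ compositionsFinset (n+1) k,
            ∏ j : Fin k, (K ((c j : ℕ) - 1) * Real.sqrt Real.pi)
            = (∏ j : Fin k, tt ((c j : ℕ))) * (Real.sqrt Real.pi)^(n+1) := by
          intro k hk c hc
          rw [mem_comps] at hc
          have hterm : ∀ j : Fin k, K ((c j : ℕ) - 1) * Real.sqrt Real.pi
              = tt ((c j : ℕ)) * (Real.sqrt Real.pi)^((c j : ℕ)) := by
            intro j
            have h1 : 1 ≤ (c j : ℕ) := hc.1 j
            have hlt : (c j : ℕ) - 1 < n+1 := by have := (c j).2; omega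
            rw [ih _ hlt]
            have hff : ff ((c j : ℕ) - 1) = tt ((c j : ℕ)) := by
              rw [ff, tt]
              have e : (c j : ℕ) - 1 + 1 = (c j : ℕ) := by omega
              rw [show ((((c j : ℕ)-1:ℕ)):ℝ) + 1 = (((c j : ℕ)):ℝ) from by
                rw [← e]; push_cast; ring]
              rw [e]
            rw [hff]
            rw [show (Real.sqrt Real.pi)^((c j : ℕ))
                = (Real.sqrt Real.pi)^((c j : ℕ)-1) * Real.sqrt Real.pi from by
              rw [← pow_succ]; congr 1; omega]
            ring
          rw [Finset.prod_congr rfl (fun j _ => hterm j), Finset.prod_mul_distrib,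
            Finset.prod_pow_eq_pow_sum, hc.2]
        have hsum : ∀ k ∈ Finset.Icc 1 (n+1), ((k.factorial : ℝ))⁻¹ *
            ∑ c ∈ compositionsFinset (n+1) k, ∏ j : Fin k, (K ((c j : ℕ) - 1) * Real.sqrt Real.pi)
            = (((k.factorial : ℝ))⁻¹ * cSum (n+1) k) * (Real.sqrt Real.pi)^(n+1) := by
          intro k hk
          rw [Finset.mem_Icc] at hk
          rw [Finset.sum_congr rfl (hprod k hk.1), ← Finset.sum_mul, cSum]
          ring
        rw [Finset.sum_congr rfl hsum, ← Finset.sum_mul]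
        have hE : ∑ k ∈ Finset.Icc 1 (n+1), ((k.factorial : ℝ))⁻¹ * cSum (n+1) k = EE (n+1) := by
          rw [EE, Finset.sum_range_succ']
          simp only [CC_pos_zero (show 1 ≤ n+1 by omega), mul_zero, add_zero]
          rw [← Finset.Ico_add_one_right_eq_Icc, Finset.sum_Ico_eq_sum_range,
            show n + 1 + 1 - 1 = n+1 from rfl]
          apply Finset.sum_congr rfl
          intro k _
          rw [show 1 + k = k + 1 from Nat.add_comm 1 k]
        rw [hE, EE_eq]
  intro N
  rw [hmain N, ff, rpow_half_nat]
  ring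
end

section
/- Let ψ : [0,T] → [0,∞) be a bounded measurable function satisfying ψ(t) ≤ ∫_0^t ψ(r)(A/√(t−r) + B) dr for all t ∈ [0,T], where A, B ≥ 0. Then ψ ≡ 0 on [0,T]. -/
open MeasureTheory intervalIntegral

/-- a Gronwall-type lemma with singular kernel. If `ψ : [0,T] → [0,∞)` is
bounded and measurable and satisfies
`ψ(t) ≤ ∫_0^t ψ(r) (A/√(t-r) + B) dr` for all `t ∈ [0,T]` with `A, B ≥ 0`,
then `ψ ≡ 0` on `[0,T]`. -/
theorem gronwall_singular (T A B : ℝ) (hT : 0 < T) (hA : 0 ≤ A) (hB : 0 ≤ B)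
    (ψ : ℝ → ℝ) (hmeas : Measurable ψ)
    (hnonneg : ∀ t ∈ Set.Icc 0 T, 0 ≤ ψ t)
    (hbdd : ∃ M : ℝ, ∀ t ∈ Set.Icc 0 T, ψ t ≤ M)
    (hineq : ∀ t ∈ Set.Icc 0 T,
      ψ t ≤ ∫ r in (0 : ℝ)..t, ψ r * (A / Real.sqrt (t - r) + B)) :
    ∀ t ∈ Set.Icc 0 T, ψ t = 0 := by
  obtain ⟨M, hM⟩ := hbdd
  have h0T : (0 : ℝ) ∈ Set.Icc 0 T := ⟨le_refl 0, hT.le⟩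
  have hM0 : 0 ≤ M := le_trans (hnonneg 0 h0T) (hM 0 h0T)
  set D : ℝ := 2 * A + B + 1 with hDdef
  have hD1 : 1 ≤ D := by nlinarith
  have hD0 : 0 < D := lt_of_lt_of_le one_pos hD1
  set t0 : ℝ := (1 / D) ^ 2 with ht0def
  have ht0pos : 0 < t0 := by positivity
  have hsqrt_t0 : Real.sqrt t0 = 1 / D := Real.sqrt_sq (by positivity)
  set c : ℝ := (2 * A + B) / D with hcdef
  have hc0 : 0 ≤ c := by positivity
  have hc1 : c < 1 := by
    rw [hcdef, div_lt_one hD0]; nlinarith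
  have hkey : 2 * A * Real.sqrt t0 + B * t0 ≤ c := by
    rw [hsqrt_t0, ht0def, hcdef]
    have hinv : 0 < 1 / D := by positivity
    have h2 : (1 : ℝ) / D ≤ 1 := by rw [div_le_one hD0]; exact hD1
    have h3 : (2 * A + B) / D = 2 * A * (1 / D) + B * (1 / D) := by ring
    rw [h3]
    nlinarith [mul_nonneg hB (sub_nonneg.mpr h2), hinv.le]
  -- the basic integral computation
  have L1 : ∀ s : ℝ, 0 ≤ s →
      IntervalIntegrable (fun u => A / Real.sqrt u + B) volume 0 s ∧
        (∫ u in (0 : ℝ)..s, (A / Real.sqrt u + B)) = 2 * A * Real.sqrt s + B * s := by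
    intro s hs
    have hrpow : IntervalIntegrable (fun u : ℝ => u ^ (-(1 / 2) : ℝ)) volume 0 s :=
      intervalIntegral.intervalIntegrable_rpow' (by norm_num)
    have hfun : ∀ u : ℝ, 0 ≤ u → A / Real.sqrt u + B = A * u ^ (-(1 / 2) : ℝ) + B := by
      intro u hu
      rcases eq_or_lt_of_le hu with h | h
      · rw [← h]
        rw [Real.sqrt_zero, div_zero, Real.zero_rpow (by norm_num), mul_zero]
      · rw [Real.sqrt_eq_rpow, Real.rpow_neg h.le, div_eq_mul_inv]
    have hI2 : IntervalIntegrable (fun u : ℝ => A * u ^ (-(1 / 2) : ℝ) + B) volume 0 s :=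
      (hrpow.const_mul A).add intervalIntegrable_const
    have hcongr : Set.EqOn (fun u => A / Real.sqrt u + B)
        (fun u : ℝ => A * u ^ (-(1 / 2) : ℝ) + B) (Set.uIcc 0 s) := by
      intro u hu
      rw [Set.uIcc_of_le hs] at hu
      exact hfun u hu.1
    constructor
    · apply hI2.congr
      have : Set.EqOn (fun u : ℝ => A * u ^ (-(1 / 2) : ℝ) + B)
          (fun u => A / Real.sqrt u + B) (Set.uIoc 0 s) := by
        intro u hu
        rw [Set.uIoc_of_le hs] at hu
        exact (hfun u hu.1.le).symm
      exact this
    · rw [intervalIntegral.integral_congr hcongr,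
        intervalIntegral.integral_add (hrpow.const_mul A) intervalIntegrable_const,
        intervalIntegral.integral_const_mul, integral_rpow (Or.inl (by norm_num)),
        intervalIntegral.integral_const]
      have h12 : (-(1 / 2) : ℝ) + 1 = 1 / 2 := by norm_num
      rw [h12, Real.zero_rpow (by norm_num), ← Real.sqrt_eq_rpow]
      simp
      ring
  -- shifted kernel
  have L2 : ∀ a t : ℝ, 0 ≤ a → a ≤ t →
      IntervalIntegrable (fun r => A / Real.sqrt (t - r) + B) volume a t ∧
        (∫ r in a..t, (A / Real.sqrt (t - r) + B))
          = 2 * A * Real.sqrt (t - a) + B * (t - a) := by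
    intro a t ha hat
    obtain ⟨hI, hval⟩ := L1 (t - a) (by linarith)
    constructor
    · have h := (hI.comp_sub_left t).symm
      simpa using h
    · have h := intervalIntegral.integral_comp_sub_left
        (a := a) (b := t) (fun u => A / Real.sqrt u + B) t
      simp only [sub_self, sub_sub_cancel] at h
      rw [h]; exact hval
  -- integrability of the integrand
  have gint : ∀ p q t : ℝ, 0 ≤ p → p ≤ q → q ≤ t → t ≤ T →
      IntervalIntegrable (fun r => ψ r * (A / Real.sqrt (t - r) + B)) volume p q := by
    intro p q t hp hpq hqt htT
    have hker : IntervalIntegrable (fun r => A / Real.sqrt (t - r) + B) volume p q := by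
      have h := (L2 0 t (le_refl 0) (le_trans hp (le_trans hpq hqt))).1
      apply h.mono_set'
      rw [Set.uIoc_of_le hpq, Set.uIoc_of_le (le_trans hp (le_trans hpq hqt))]
      exact Set.Ioc_subset_Ioc hp hqt
    apply (hker.const_mul M).mono_fun'
    · exact ((hmeas.mul (by fun_prop)).aestronglyMeasurable)
    · filter_upwards [ae_restrict_mem measurableSet_uIoc] with r hr
      rw [Set.uIoc_of_le hpq] at hr
      have hrT : r ∈ Set.Icc 0 T := ⟨le_trans hp hr.1.le, le_trans hr.2 (le_trans hqt htT)⟩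
      have hk : 0 ≤ A / Real.sqrt (t - r) + B :=
        add_nonneg (div_nonneg hA (Real.sqrt_nonneg _)) hB
      simp only [norm_mul, Real.norm_eq_abs, abs_of_nonneg (hnonneg r hrT), abs_of_nonneg hk]
      exact mul_le_mul_of_nonneg_right (hM r hrT) hk
  -- the contraction step
  have step : ∀ a K : ℝ, 0 ≤ a → 0 ≤ K →
      (∀ r ∈ Set.Icc 0 T, r ≤ a → ψ r = 0) →
      (∀ r ∈ Set.Icc 0 T, r ≤ a + t0 → ψ r ≤ K) →
      ∀ t ∈ Set.Icc 0 T, t ≤ a + t0 → ψ t ≤ c * K := by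
    intro a K ha hK h0 hKb t ht hta
    by_cases hcase : t ≤ a
    · rw [h0 t ht hcase]; positivity
    push_neg at hcase
    have hInt1 := gint 0 a t (le_refl 0) ha hcase.le ht.2
    have hInt2 := gint a t t ha hcase.le (le_refl t) ht.2
    have hsplit := intervalIntegral.integral_add_adjacent_intervals hInt1 hInt2
    have h0int : (∫ r in (0 : ℝ)..a, ψ r * (A / Real.sqrt (t - r) + B)) = 0 := by
      have : Set.EqOn (fun r => ψ r * (A / Real.sqrt (t - r) + B))
          (fun _ => (0 : ℝ)) (Set.uIcc 0 a) := by
        intro r hr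
        rw [Set.uIcc_of_le ha] at hr
        simp only
        rw [h0 r ⟨hr.1, le_trans hr.2 (le_trans hcase.le ht.2)⟩ hr.2, zero_mul]
      rw [intervalIntegral.integral_congr this, intervalIntegral.integral_zero]
    have hker := L2 a t ha hcase.le
    have hmono : (∫ r in a..t, ψ r * (A / Real.sqrt (t - r) + B))
        ≤ ∫ r in a..t, K * (A / Real.sqrt (t - r) + B) := by
      apply intervalIntegral.integral_mono_on hcase.le hInt2 (hker.1.const_mul K)
      intro r hr
      have hk : 0 ≤ A / Real.sqrt (t - r) + B :=
        add_nonneg (div_nonneg hA (Real.sqrt_nonneg _)) hB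
      exact mul_le_mul_of_nonneg_right
        (hKb r ⟨le_trans ha hr.1, le_trans hr.2 ht.2⟩ (le_trans hr.2 hta)) hk
    have hval : (∫ r in a..t, K * (A / Real.sqrt (t - r) + B))
        = K * (2 * A * Real.sqrt (t - a) + B * (t - a)) := by
      rw [intervalIntegral.integral_const_mul, hker.2]
    have hbound : K * (2 * A * Real.sqrt (t - a) + B * (t - a)) ≤ K * c := by
      apply mul_le_mul_of_nonneg_left _ hK
      have h1 : Real.sqrt (t - a) ≤ Real.sqrt t0 := Real.sqrt_le_sqrt (by linarith)
      have h2 : t - a ≤ t0 := by linarith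
      have h3 := mul_le_mul_of_nonneg_left h1 (by linarith : (0:ℝ) ≤ 2 * A)
      have h4 := mul_le_mul_of_nonneg_left h2 hB
      linarith
    calc ψ t ≤ ∫ r in (0 : ℝ)..t, ψ r * (A / Real.sqrt (t - r) + B) := hineq t ht
      _ = (∫ r in (0 : ℝ)..a, ψ r * (A / Real.sqrt (t - r) + B))
          + ∫ r in a..t, ψ r * (A / Real.sqrt (t - r) + B) := hsplit.symm
      _ = ∫ r in a..t, ψ r * (A / Real.sqrt (t - r) + B) := by rw [h0int, zero_add]
      _ ≤ K * c := le_trans hmono (by rw [hval]; exact hbound)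
      _ = c * K := mul_comm _ _
  -- the zero extension step
  have zero_step : ∀ a : ℝ, 0 ≤ a →
      (∀ r ∈ Set.Icc 0 T, r ≤ a → ψ r = 0) →
      ∀ t ∈ Set.Icc 0 T, t ≤ a + t0 → ψ t = 0 := by
    intro a ha h0 t ht hta
    have hn : ∀ n : ℕ, ∀ s ∈ Set.Icc 0 T, s ≤ a + t0 → ψ s ≤ c ^ n * M := by
      intro n
      induction n with
      | zero => intro s hs _; simpa using hM s hs
      | succ n ih =>
        intro s hs hsa
        have h := step a (c ^ n * M) ha (by positivity) h0 ih s hs hsa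
        calc ψ s ≤ c * (c ^ n * M) := h
          _ = c ^ (n + 1) * M := by ring
    have hlim : Filter.Tendsto (fun n : ℕ => c ^ n * M) Filter.atTop (nhds 0) := by
      simpa using (tendsto_pow_atTop_nhds_zero_of_lt_one hc0 hc1).mul_const M
    have hle : ψ t ≤ 0 := ge_of_tendsto' hlim (fun n => hn n t ht hta)
    exact le_antisymm hle (hnonneg t ht)
  -- main induction
  have main : ∀ n : ℕ, ∀ t ∈ Set.Icc 0 T, t ≤ n * t0 → ψ t = 0 := by
    intro n
    induction n with
    | zero =>
      intro t ht hle
      have ht0' : t = 0 := le_antisymm (by simpa using hle) ht.1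
      subst ht0'
      have h := hineq 0 h0T
      rw [intervalIntegral.integral_same] at h
      exact le_antisymm h (hnonneg 0 h0T)
    | succ n ih =>
      intro t ht hle
      refine zero_step (n * t0) (by positivity) (fun r hr hrn => ih r hr hrn) t ht ?_
      push_cast at hle
      linarith
  intro t ht
  obtain ⟨n, hn⟩ := exists_nat_ge (T / t0)
  have hTn : T ≤ n * t0 := by
    rw [div_le_iff₀ ht0pos] at hn
    linarith
  exact main n t ht (le_trans ht.2 hTn)
end

section
/- Let I ⊂ ℝ^d be a compact set such that #(I_ε ∩ B(x,s)) ≤ C (s/ε ∨ 1)^{d−1} for all x, s > 0 and finite subsets I_ε ⊂ I. Suppose q : I_ε → [0,∞) satisfies q(z) ≤ C₁ (ε ∨ t^{1/2})^{-d} exp(−|z−x|/(ε ∨ t^{1/2})) for some fixed x. Then ∑_{z ∈ I_ε} q(z) ≤ C' ε^{-(d−1)} (ε ∨ t^{1/2})^{-1} with C' depending only on C, C₁ and d. -/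
open scoped Classical

/-- Key elementary estimate: `(k+1)^m e^{-k} ≤ (2m+2)^m e^{1/2} (e^{-1/2})^k`. -/
theorem aux_poly_exp_bound (m : ℕ) (k : ℕ) :
    ((k : ℝ) + 1) ^ m * Real.exp (-(k : ℝ)) ≤
      (2 * (m : ℝ) + 2) ^ m * Real.exp (1 / 2) * Real.exp (-(1 / 2) : ℝ) ^ k := by
  have h2m : (0 : ℝ) < 2 * (m : ℝ) + 2 := by positivity
  have hy : ((k : ℝ) + 1) ≤ (2 * (m : ℝ) + 2) * Real.exp (((k : ℝ) + 1) / (2 * (m : ℝ) + 2)) := by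
    rw [← div_le_iff₀' h2m]
    calc ((k : ℝ) + 1) / (2 * (m : ℝ) + 2)
        ≤ ((k : ℝ) + 1) / (2 * (m : ℝ) + 2) + 1 := by linarith
      _ ≤ Real.exp (((k : ℝ) + 1) / (2 * (m : ℝ) + 2)) := Real.add_one_le_exp _
  have hexp : ((k : ℝ) + 1) / (2 * (m : ℝ) + 2) * m ≤ ((k : ℝ) + 1) / 2 := by
    rw [div_mul_eq_mul_div, div_le_div_iff₀ h2m (by norm_num)]
    have hk : (0 : ℝ) ≤ (k : ℝ) + 1 := by positivity
    nlinarith [Nat.cast_nonneg (α := ℝ) m]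
  have h1 : ((k : ℝ) + 1) ^ m ≤ (2 * (m : ℝ) + 2) ^ m * Real.exp (((k : ℝ) + 1) / 2) := by
    calc ((k : ℝ) + 1) ^ m
        ≤ ((2 * (m : ℝ) + 2) * Real.exp (((k : ℝ) + 1) / (2 * (m : ℝ) + 2))) ^ m :=
          pow_le_pow_left₀ (by positivity) hy m
      _ = (2 * (m : ℝ) + 2) ^ m * Real.exp (((k : ℝ) + 1) / (2 * (m : ℝ) + 2) * m) := by
          rw [mul_pow, ← Real.exp_nat_mul]; ring_nf
      _ ≤ (2 * (m : ℝ) + 2) ^ m * Real.exp (((k : ℝ) + 1) / 2) := by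
          gcongr
  calc ((k : ℝ) + 1) ^ m * Real.exp (-(k : ℝ))
      ≤ (2 * (m : ℝ) + 2) ^ m * Real.exp (((k : ℝ) + 1) / 2) * Real.exp (-(k : ℝ)) := by
        have := Real.exp_pos (-(k : ℝ))
        exact mul_le_mul_of_nonneg_right h1 this.le
    _ = (2 * (m : ℝ) + 2) ^ m * Real.exp (1 / 2) * Real.exp (-(1 / 2) : ℝ) ^ k := by
        rw [← Real.exp_nat_mul, mul_assoc, mul_assoc, ← Real.exp_add, ← Real.exp_add]
        congr 2
        ring

/-- let `I_ε` be a finite set in `ℝ^d` with the local cardinality bound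
`#(I_ε ∩ B(y,s)) ≤ C (s/ε ∨ 1)^{d-1}` for all centers `y` and radii `s > 0`, and let
`q ≥ 0` on `I_ε` satisfy `q(z) ≤ C₁ (ε ∨ √t)^{-d} exp(−|z−x|/(ε ∨ √t))` for some fixed `x`.
Then `∑_{z ∈ I_ε} q(z) ≤ C' ε^{-(d-1)} (ε ∨ √t)^{-1}`, with `C'` depending only on
`C`, `C₁` and `d`. -/
theorem discrete_surface_heat_kernel_sum (d : ℕ) (hd : 1 ≤ d) (C C₁ : ℝ)
    (hC : 0 < C) (hC₁ : 0 < C₁) :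
    ∃ C' : ℝ, 0 < C' ∧
      ∀ (ε t : ℝ) (Iε : Finset (EuclideanSpace ℝ (Fin d)))
        (q : EuclideanSpace ℝ (Fin d) → ℝ) (x : EuclideanSpace ℝ (Fin d)),
        0 < ε → 0 ≤ t →
        (∀ (y : EuclideanSpace ℝ (Fin d)) (s : ℝ), 0 < s →
          ((Iε.filter (· ∈ Metric.ball y s)).card : ℝ) ≤ C * (max (s / ε) 1) ^ (d - 1)) →
        (∀ z ∈ Iε, 0 ≤ q z) →
        (∀ z ∈ Iε, q z ≤
          C₁ / (max ε (Real.sqrt t)) ^ d * Real.exp (-dist z x / max ε (Real.sqrt t))) →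
        ∑ z ∈ Iε, q z ≤ C' / (ε ^ (d - 1) * max ε (Real.sqrt t)) := by
  set m := d - 1 with hm
  have hdm : d = m + 1 := by omega
  set r : ℝ := Real.exp (-(1 / 2) : ℝ) with hr_def
  have hr0 : 0 ≤ r := (Real.exp_pos _).le
  have hr1 : r < 1 := by
    rw [hr_def, Real.exp_lt_one_iff]; norm_num
  have hr1' : 0 < 1 - r := by linarith
  refine ⟨C * C₁ * ((2 * (m : ℝ) + 2) ^ m * Real.exp (1 / 2)) * (1 - r)⁻¹, by positivity,
    ?_⟩
  intro ε t Iε q x hε ht hcard hq0 hqb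
  set h : ℝ := max ε (Real.sqrt t) with hh_def
  have hεh : ε ≤ h := le_max_left _ _
  have hh : 0 < h := lt_of_lt_of_le hε hεh
  set f : EuclideanSpace ℝ (Fin d) → ℕ := fun z => ⌊dist z x / h⌋₊ with hf_def
  set B : ℝ := C * C₁ * ((2 * (m : ℝ) + 2) ^ m * Real.exp (1 / 2)) / (ε ^ m * h) with hB_def
  have hB : 0 < B := by rw [hB_def]; positivity
  have inner : ∀ k ∈ Iε.image f,
      ∑ z ∈ Iε.filter (fun z => f z = k), (C₁ / h ^ d * Real.exp (-dist z x / h))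
        ≤ B * r ^ k := by
    intro k _
    have hstep1 : ∑ z ∈ Iε.filter (fun z => f z = k),
        (C₁ / h ^ d * Real.exp (-dist z x / h))
          ≤ (Iε.filter (fun z => f z = k)).card • (C₁ / h ^ d * Real.exp (-(k : ℝ))) := by
      apply Finset.sum_le_card_nsmul
      intro z hz
      rw [Finset.mem_filter] at hz
      have hk : (k : ℝ) ≤ dist z x / h := by
        rw [← hz.2]
        exact Nat.floor_le (by positivity)
      have : -dist z x / h ≤ -(k : ℝ) := by
        rw [neg_div]; linarith
      have := Real.exp_le_exp.mpr this
      have hC₁h : 0 ≤ C₁ / h ^ d := by positivity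
      exact mul_le_mul_of_nonneg_left this hC₁h
    have hsub : Iε.filter (fun z => f z = k) ⊆
        Iε.filter (· ∈ Metric.ball x (((k : ℝ) + 1) * h)) := by
      intro z hz
      rw [Finset.mem_filter] at hz ⊢
      refine ⟨hz.1, ?_⟩
      have hlt : dist z x / h < (k : ℝ) + 1 := by
        rw [← hz.2]
        exact Nat.lt_floor_add_one _
      rw [Metric.mem_ball]
      rw [div_lt_iff₀ hh] at hlt
      linarith [hlt]
    have hcard' : ((Iε.filter (fun z => f z = k)).card : ℝ)
        ≤ C * (((k : ℝ) + 1) * h / ε) ^ m := by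
      have hs : (0 : ℝ) < ((k : ℝ) + 1) * h := by positivity
      have h1 : ((Iε.filter (fun z => f z = k)).card : ℝ)
          ≤ ((Iε.filter (· ∈ Metric.ball x (((k : ℝ) + 1) * h))).card : ℝ) := by
        exact_mod_cast Finset.card_le_card hsub
      have h2 := hcard x (((k : ℝ) + 1) * h) hs
      have hmax : max (((k : ℝ) + 1) * h / ε) 1 = ((k : ℝ) + 1) * h / ε := by
        apply max_eq_left
        rw [le_div_iff₀ hε]
        have hk1 : (0 : ℝ) ≤ (k : ℝ) := Nat.cast_nonneg k
        nlinarith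
      rw [hmax] at h2
      calc ((Iε.filter (fun z => f z = k)).card : ℝ)
          ≤ _ := h1
        _ ≤ C * (((k : ℝ) + 1) * h / ε) ^ (d - 1) := h2
    have hterm : (0 : ℝ) ≤ C₁ / h ^ d * Real.exp (-(k : ℝ)) := by positivity
    calc ∑ z ∈ Iε.filter (fun z => f z = k), (C₁ / h ^ d * Real.exp (-dist z x / h))
        ≤ (Iε.filter (fun z => f z = k)).card • (C₁ / h ^ d * Real.exp (-(k : ℝ))) := hstep1
      _ = ((Iε.filter (fun z => f z = k)).card : ℝ) * (C₁ / h ^ d * Real.exp (-(k : ℝ))) := by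
          rw [nsmul_eq_mul]
      _ ≤ C * (((k : ℝ) + 1) * h / ε) ^ m * (C₁ / h ^ d * Real.exp (-(k : ℝ))) :=
          mul_le_mul_of_nonneg_right hcard' hterm
      _ = (C * C₁ / (ε ^ m * h)) * (((k : ℝ) + 1) ^ m * Real.exp (-(k : ℝ))) := by
          have hrw : (((k : ℝ) + 1) * h / ε) ^ m = ((k : ℝ) + 1) ^ m * h ^ m / ε ^ m := by
            rw [div_pow, mul_pow]
          rw [hrw, hdm, pow_succ]
          field_simp
      _ ≤ (C * C₁ / (ε ^ m * h)) * ((2 * (m : ℝ) + 2) ^ m * Real.exp (1 / 2) * r ^ k) := by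
          apply mul_le_mul_of_nonneg_left (aux_poly_exp_bound m k) (by positivity)
      _ = B * r ^ k := by rw [hB_def]; ring
  have hgeom : ∑ k ∈ Iε.image f, r ^ k ≤ (1 - r)⁻¹ := by
    have hsummable : Summable (fun k : ℕ => r ^ k) := summable_geometric_of_lt_one hr0 hr1
    calc ∑ k ∈ Iε.image f, r ^ k
        ≤ ∑' k : ℕ, r ^ k := Summable.sum_le_tsum _ (fun i _ => by positivity) hsummable
      _ = (1 - r)⁻¹ := tsum_geometric_of_lt_one hr0 hr1
  calc ∑ z ∈ Iε, q z
      ≤ ∑ z ∈ Iε, (C₁ / h ^ d * Real.exp (-dist z x / h)) := Finset.sum_le_sum hqb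
    _ = ∑ k ∈ Iε.image f, ∑ z ∈ Iε.filter (fun z => f z = k),
        (C₁ / h ^ d * Real.exp (-dist z x / h)) :=
        (Finset.sum_fiberwise_of_maps_to (fun z hz => Finset.mem_image_of_mem f hz) _).symm
    _ ≤ ∑ k ∈ Iε.image f, B * r ^ k := Finset.sum_le_sum inner
    _ = B * ∑ k ∈ Iε.image f, r ^ k := (Finset.mul_sum _ _ _).symm
    _ ≤ B * (1 - r)⁻¹ := mul_le_mul_of_nonneg_left hgeom hB.le
    _ = C * C₁ * ((2 * (m : ℝ) + 2) ^ m * Real.exp (1 / 2)) * (1 - r)⁻¹ / (ε ^ m * h) := by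
        rw [hB_def]; ring
end
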